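/- arXiv:2005.06322 — 5 statements merged into one kernel-verified Lean document; each statement's English description precedes it below -/
import Mathlib

section
/- For every unbounded modulus function f, weight function g, and arithmetic sequence (a_n), the subgroup t^{f,g}_{(a_n)}(𝕋) strictly contains the classical characterized subgroup t_{(a_n)}(𝕋) = {x ∈ 𝕋 : ‖a_n x‖ → 0}. -/
open Filter Set

/-- A modulus function: nonnegative, vanishing exactly at 0, subadditive,
non-decreasing, right continuous at 0 (all on `[0,∞)`). -/
def IsModulus (f : ℝ → ℝ) : Prop :=
  (∀ x : ℝ, 0 ≤ x → 0 ≤ f x) ∧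
  (∀ x : ℝ, 0 ≤ x → (f x = 0 ↔ x = 0)) ∧
  (∀ x y : ℝ, 0 ≤ x → 0 ≤ y → f (x + y) ≤ f x + f y) ∧
  (∀ x y : ℝ, 0 ≤ x → x ≤ y → f x ≤ f y) ∧
  ContinuousWithinAt f (Set.Ici 0) 0

/-- An unbounded modulus function. -/
def IsUnboundedModulus (f : ℝ → ℝ) : Prop :=
  IsModulus f ∧ Tendsto f atTop atTop

/-- A weight function `g : ℕ → [0,∞)` with `g n → ∞` and `n / g n ↛ 0`. -/
def IsWeight (g : ℕ → ℝ) : Prop :=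
  (∀ n, 0 ≤ g n) ∧ Tendsto g atTop atTop ∧
  ¬ Tendsto (fun n : ℕ => (n : ℝ) / g n) atTop (nhds 0)

open scoped Classical in
/-- `|A ∩ [1,n]|`. -/
noncomputable def cnt (A : Set ℕ) (n : ℕ) : ℕ :=
  ((Finset.Icc 1 n).filter (fun m => m ∈ A)).card

/-- The ideal `𝒵_g(f)` of sets whose `f`-density of weight `g` is zero
(for nonnegative sequences, `limsup = 0` is equivalent to convergence to `0`). -/
noncomputable def Zd (f : ℝ → ℝ) (g : ℕ → ℝ) : Set (Set ℕ) :=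
  {A | Tendsto (fun n => f (cnt A n) / f (g n)) atTop (nhds 0)}

/-- The `f^g`-statistically characterized subgroup `t^{f,g}_{(a_n)}(𝕋)`. -/
noncomputable def statChar (f : ℝ → ℝ) (g : ℕ → ℝ) (a : ℕ → ℤ) :
    Set (AddCircle (1 : ℝ)) :=
  {x | ∀ ε > 0, {n : ℕ | ε ≤ ‖(a n) • x‖} ∈ Zd f g}

/-- An arithmetic sequence: `a 0 = 1`, strictly increasing, `a n ∣ a (n+1)`,
and all ratios `q_n ≥ 2`. -/
def IsArith (a : ℕ → ℕ) : Prop :=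
  a 0 = 1 ∧ StrictMono a ∧ (∀ n, a n ∣ a (n + 1)) ∧ (∀ n, 2 * a n ≤ a (n + 1))

/-- Canonical representation `x = Σ_{n≥1} c_n / a_n` with `0 ≤ c_n ≤ q_n - 1`
and `c_n < q_n - 1` infinitely often; here `q_n = a n / a (n-1)`. -/
def IsCanonRep (a : ℕ → ℕ) (c : ℕ → ℕ) (x : AddCircle (1 : ℝ)) : Prop :=
  c 0 = 0 ∧ (∀ n, 1 ≤ n → c n ≤ a n / a (n - 1) - 1) ∧
  (∀ N, ∃ n, N ≤ n ∧ c n < a n / a (n - 1) - 1) ∧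
  x = ((∑' n, (c n : ℝ) / (a n : ℝ) : ℝ) : AddCircle (1 : ℝ))

section Helpers
private lemma auxFinal {M k₁ Kn : ℕ} {c F ε' : ℝ} (hε' : 0 < ε')
    (hc : 0 ≤ c) (hF : ((Kn:ℝ))^2 ≤ F) (hM1 : M + 1 ≤ k₁)
    (hceil : (⌈2 * (M:ℝ) * c / ε'⌉₊ + 1 : ℕ) ≤ k₁) (hk : k₁ ≤ Kn) :
    ((M * (Kn + M + 1) : ℕ) : ℝ) * c / F < ε' := by
  have hKn1 : M + 1 ≤ Kn := le_trans hM1 hk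
  have hKpos : (0:ℝ) < (Kn:ℝ) := by
    have : (1:ℕ) ≤ Kn := by omega
    exact_mod_cast Nat.lt_of_lt_of_le Nat.zero_lt_one this
  have hKM : ((M:ℝ)) + 1 ≤ (Kn:ℝ) := by exact_mod_cast hKn1
  have hFpos : (0:ℝ) < F := lt_of_lt_of_le (by positivity) hF
  have hMnn : (0:ℝ) ≤ (M:ℝ) := Nat.cast_nonneg _
  have hlast : 2 * (M:ℝ) * c / ε' < (Kn:ℝ) := by
    have h2 : 2 * (M:ℝ) * c / ε' ≤ ⌈2 * (M:ℝ) * c / ε'⌉₊ := Nat.le_ceil _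
    have h3 : ((⌈2 * (M:ℝ) * c / ε'⌉₊ : ℝ) + 1) ≤ (k₁ : ℝ) := by exact_mod_cast hceil
    have h4 : (k₁ : ℝ) ≤ Kn := by exact_mod_cast hk
    linarith
  rw [div_lt_iff₀ hε'] at hlast
  rw [div_lt_iff₀ hFpos]
  have hcast : ((M * (Kn + M + 1) : ℕ) : ℝ) = (M:ℝ) * ((Kn : ℝ) + M + 1) := by
    push_cast; ring
  rw [hcast]
  have h5 : (Kn:ℝ) + M + 1 ≤ 2 * Kn := by linarith
  calc (M:ℝ) * ((Kn:ℝ) + M + 1) * c ≤ (M:ℝ) * (2 * (Kn:ℝ)) * c := by gcongr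
  _ = (2 * (M:ℝ) * c) * (Kn:ℝ) := by ring
  _ < ((Kn:ℝ) * ε') * (Kn:ℝ) := mul_lt_mul_of_pos_right hlast hKpos
  _ = ε' * ((Kn:ℝ))^2 := by ring
  _ ≤ ε' * F := mul_le_mul_of_nonneg_left hF hε'.le


private lemma normCoeEq {y : ℝ} (h0 : 0 ≤ y) (h : y ≤ 1/2) : ‖(y : AddCircle (1:ℝ))‖ = y := by
  rw [(AddCircle.norm_coe_eq_abs_iff (1:ℝ) one_ne_zero).mpr
    (by rw [abs_one]; rwa [abs_of_nonneg h0]), abs_of_nonneg h0]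

private lemma normCoeLb {y : ℝ} (h1 : 1/4 ≤ y) (h2 : y ≤ 3/4) :
    1/4 ≤ ‖(y : AddCircle (1:ℝ))‖ := by
  rw [AddCircle.norm_eq]
  simp only [inv_one, one_mul, mul_one]
  rcases le_or_gt ((round y : ℝ)) 0 with h | h
  · rw [abs_of_nonneg (by linarith)]; linarith
  · have : (1:ℝ) ≤ round y := by exact_mod_cast h
    rw [abs_of_nonpos (by linarith)]; linarith

variable {a : ℕ → ℕ} (ha : IsArith a)
include ha

private lemma auxApos : ∀ n, 0 < a n :=
  fun n => lt_of_lt_of_le (by simp [ha.1]) (ha.2.1.monotone n.zero_le)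

private lemma auxAdvd : ∀ {m n : ℕ}, m ≤ n → a m ∣ a n := by
  intro m n h
  induction n with
  | zero => simp_all
  | succ n ih =>
    rcases Nat.lt_succ_iff_lt_or_eq.mp (Nat.lt_succ_of_le h) with h' | h'
    · exact (ih (Nat.lt_succ_iff.mp h')).trans (ha.2.2.1 n)
    · subst h'; rfl

private lemma auxAgrow : ∀ (m t : ℕ), a m * 2 ^ t ≤ a (m + t) := by
  intro m t
  induction t with
  | zero => simp
  | succ t ih =>
    have h2 := ha.2.2.2 (m + t)
    calc a m * 2 ^ (t+1) = (a m * 2 ^ t) * 2 := by ring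
    _ ≤ a (m + t) * 2 := by omega
    _ ≤ a (m + t + 1) := by omega

private lemma auxAinv (m i : ℕ) (h : m ≤ i) : (1:ℝ)/(a i) ≤ (1/2)^(i - m) / a m := by
  have h1 : a m * 2 ^ (i - m) ≤ a i := by
    have := auxAgrow ha m (i - m); rwa [Nat.add_sub_cancel' h] at this
  have h2 : (0:ℝ) < a m := by exact_mod_cast auxApos ha m
  have h3 : (0:ℝ) < a i := by exact_mod_cast auxApos ha i
  rw [div_le_div_iff₀ h3 h2, one_mul]
  have h4 : ((a m : ℝ) * 2 ^ (i - m)) ≤ a i := by exact_mod_cast h1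
  calc (a m : ℝ) = (1/2)^(i-m) * (a m * 2^(i-m)) := by
        rw [div_pow, one_pow, ← mul_assoc, mul_comm ((1:ℝ)/2^(i-m)), mul_assoc,
          div_mul_cancel₀]
        · ring
        · positivity
  _ ≤ (1/2)^(i-m) * a i := by
        have h5 : (0:ℝ) ≤ (1/2:ℝ)^(i-m) := by positivity
        nlinarith
  _ = _ := by ring

end Helpers

theorem stmt14 (f : ℝ → ℝ) (hf : IsUnboundedModulus f) (g : ℕ → ℝ) (hg : IsWeight g)
    (a : ℕ → ℕ) (ha : IsArith a) :
    {x : AddCircle (1 : ℝ) | Tendsto (fun n => ‖((a n : ℤ)) • x‖) atTop (nhds 0)} ⊂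
      statChar f g (fun n => (a n : ℤ)) := by
  classical
  obtain ⟨⟨hfnn, hf0iff, hfsub, hfmono, _⟩, hfu⟩ := hf
  have hf0 : f 0 = 0 := (hf0iff 0 le_rfl).mpr rfl
  have hf1 : 0 ≤ f 1 := hfnn 1 zero_le_one
  have hfnat : ∀ t : ℕ, f t ≤ t * f 1 := by
    intro t
    induction t with
    | zero => simp [hf0]
    | succ n ih =>
      have := hfsub n 1 (by positivity) zero_le_one
      push_cast
      push_cast at ih
      linarith
  have hfg : Tendsto (fun m => f (g m)) atTop atTop := hfu.comp hg.2.1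
  have hfgnn : ∀ n, 0 ≤ f (g n) := fun n => hfnn _ (hg.1 n)
  -- a generic criterion for membership in `Zd`
  have hZd : ∀ (A : Set ℕ) (c : ℕ → ℕ),
      (∀ n, cnt A n ≤ c n) → Tendsto (fun n => (c n : ℝ) * f 1 / f (g n)) atTop (nhds 0) →
      A ∈ Zd f g := by
    intro A c hc hten
    simp only [Zd, Set.mem_setOf_eq]
    apply squeeze_zero'
      (Eventually.of_forall fun n => div_nonneg (hfnn _ (Nat.cast_nonneg _)) (hfgnn n))
      ?_ hten
    filter_upwards [hfg.eventually_ge_atTop 1] with n hn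
    apply div_le_div_of_nonneg_right ?_ (by linarith)
    calc f (cnt A n) ≤ (cnt A n : ℝ) * f 1 := hfnat _
    _ ≤ (c n : ℝ) * f 1 := by
        have : (cnt A n : ℝ) ≤ c n := by exact_mod_cast hc n
        nlinarith
  -- subset direction
  have hsubset : {x : AddCircle (1 : ℝ) |
      Tendsto (fun n => ‖((a n : ℤ)) • x‖) atTop (nhds 0)} ⊆
      statChar f g (fun n => (a n : ℤ)) := by
    intro x hx ε hε
    simp only [Set.mem_setOf_eq] at hx
    obtain ⟨Nε, hNε⟩ := eventually_atTop.mp (hx.eventually (gt_mem_nhds hε))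
    apply hZd _ (fun _ => Nε)
    · intro n
      rw [cnt]
      calc (Finset.filter _ _).card ≤ (Finset.range Nε).card := by
            apply Finset.card_le_card
            intro m hm
            rw [Finset.mem_filter] at hm
            rw [Finset.mem_range]
            by_contra hc
            exact absurd hm.2 (not_le.mpr (hNε m (le_of_not_gt hc)))
      _ = Nε := Finset.card_range Nε
    · exact Tendsto.div_atTop tendsto_const_nhds hfg
  rw [Set.ssubset_iff_of_subset hsubset]
  -- choose thresholds
  choose N hN using fun k : ℕ => eventually_atTop.mp (hfg.eventually_ge_atTop ((k:ℝ)^2))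
  set φ : ℕ → ℕ := fun k => Nat.rec (max 1 (N 0)) (fun k ih => max (ih + k + 2) (N (k+1))) k
    with hφdef
  have hφs : ∀ k, φ k + k + 2 ≤ φ (k+1) := fun k => le_max_left _ _
  have hφN : ∀ k, N k ≤ φ k := by
    intro k
    cases k with
    | zero => exact le_max_right _ _
    | succ k => exact le_max_right _ _
  have hφmono : StrictMono φ := strictMono_nat_of_lt_succ (fun k => by have := hφs k; omega)
  have hφ1 : ∀ k, 1 ≤ φ k := by
    intro k
    calc 1 ≤ φ 0 := le_max_left _ _
    _ ≤ φ k := hφmono.monotone k.zero_le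
  have hφge : ∀ k, k + 1 ≤ φ k := by
    intro k
    induction k with
    | zero => exact hφ1 0
    | succ k ih => have := hφs k; omega
  have hφadd : ∀ K j : ℕ, φ K + j ≤ φ (j + K) := by
    intro K j
    induction j with
    | zero => simp
    | succ j ih => have := hφs (j + K); have : φ (j+K) < φ (j+1+K) := hφmono (by omega); omega
  have hgm : ∀ k m : ℕ, φ k ≤ m → ((k:ℝ))^2 ≤ f (g m) := fun k m h =>
    hN k m (le_trans (hφN k) h)
  clear_value φ
  clear hφdef hφN hN N
  -- the digits
  set q : ℕ → ℕ := fun k => a (φ k) / a (φ k - 1) with hqdef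
  set b : ℕ → ℕ := fun k => q k / 2 with hbdef
  set u : ℕ → ℝ := fun k => (b k : ℝ) / (a (φ k)) with hudef
  have haq : ∀ k, a (φ k) = q k * a (φ k - 1) :=
    fun k => (Nat.div_mul_cancel (auxAdvd ha (Nat.sub_le _ _))).symm
  have hq2 : ∀ k, 2 ≤ q k := by
    intro k
    have h2 := ha.2.2.2 (φ k - 1)
    rw [Nat.sub_add_cancel (hφ1 k)] at h2
    exact (Nat.le_div_iff_mul_le (auxApos ha _)).mpr (by omega)
  have hupos : ∀ k, 0 ≤ u k := fun k => div_nonneg (Nat.cast_nonneg _) (Nat.cast_nonneg _)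
  have hu_le : ∀ k, u k ≤ 1/2 * (1 / a (φ k - 1)) := by
    intro k
    have hA : (0:ℝ) < a (φ k - 1) := by exact_mod_cast auxApos ha _
    have hQ : (2:ℝ) ≤ q k := by exact_mod_cast hq2 k
    have hb2 : (b k:ℝ) * 2 ≤ q k := by
      have : b k * 2 ≤ q k := Nat.div_mul_le_self (q k) 2
      exact_mod_cast this
    have haqr : ((a (φ k) : ℝ)) = (q k : ℝ) * a (φ k - 1) := by exact_mod_cast haq k
    rw [hudef]
    simp only
    rw [haqr, div_le_iff₀ (by positivity)]
    have h1 : (1:ℝ)/2 * (1 / ↑(a (φ k - 1))) * (↑(q k) * ↑(a (φ k - 1)))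
        = (q k : ℝ)/2 := by field_simp
    rw [h1]
    linarith
  have hu_geo : ∀ k, u k ≤ (1/2)^k := by
    intro k
    have h1 := hu_le k
    have h2 : (1:ℝ)/(a (φ k - 1)) ≤ (1/2)^(φ k - 1 - 0)/ a 0 := auxAinv ha 0 _ (Nat.zero_le _)
    have h3 : ((1:ℝ)/2)^(φ k - 1 - 0) ≤ (1/2)^k := by
      apply pow_le_pow_of_le_one (by norm_num) (by norm_num)
      have := hφge k; omega
    rw [ha.1] at h2
    simp only [Nat.cast_one, div_one] at h2
    calc u k ≤ 1/2 * (1/ a (φ k - 1)) := h1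
    _ ≤ 1/2 * (1/2)^k := by nlinarith
    _ ≤ (1/2)^k := by
        have : (0:ℝ) ≤ (1/2)^k := by positivity
        linarith
  have hsum : Summable u :=
    Summable.of_nonneg_of_le hupos hu_geo summable_geometric_two
  have hsumK : ∀ K : ℕ, Summable fun j => u (j + K) :=
    fun K => (summable_nat_add_iff K).mpr hsum
  have htailnn : ∀ K : ℕ, 0 ≤ ∑' j, u (j + K) := fun K => tsum_nonneg (fun j => hupos _)
  -- tail bound
  have htail : ∀ m K : ℕ, m < φ K →
      (a m : ℝ) * ∑' j, u (j + K) ≤ 2 * (1/2)^(φ K - m) := by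
    intro m K hmK
    have ham : (0:ℝ) < a m := by exact_mod_cast auxApos ha m
    have hterm : ∀ j : ℕ, u (j + K) ≤ ((1/2)^(φ K - m) / a m) * (1/2)^j := by
      intro j
      have h1 := hu_le (j + K)
      have hji : m ≤ φ (j + K) - 1 := by
        have := hφadd K j; omega
      have h3 := auxAinv ha m (φ (j + K) - 1) hji
      have h4 : (φ K - m - 1) + j ≤ (φ (j + K) - 1) - m := by
        have := hφadd K j; omega
      have h5 : ((1:ℝ)/2)^((φ (j + K) - 1) - m) ≤ (1/2)^((φ K - m - 1) + j) :=
        pow_le_pow_of_le_one (by norm_num) (by norm_num) h4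
      have h6 : (0:ℝ) < a (φ (j+K) - 1) := by exact_mod_cast auxApos ha _
      have hexp : (φ K - m - 1) + j + 1 = (φ K - m) + j := by omega
      calc u (j + K) ≤ 1/2 * (1 / a (φ (j + K) - 1)) := h1
      _ ≤ 1/2 * ((1/2)^((φ (j+K) - 1) - m) / a m) := by nlinarith
      _ ≤ 1/2 * ((1/2)^((φ K - m - 1) + j) / a m) := by
          have : ((1:ℝ)/2)^((φ (j + K) - 1) - m) / a m ≤ (1/2)^((φ K - m - 1) + j) / a m := by
            apply div_le_div_of_nonneg_right h5 ham.le
          linarith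
      _ = (1/2)^((φ K - m - 1) + j + 1) / a m := by rw [pow_succ]; ring
      _ = (1/2)^((φ K - m) + j) / a m := by rw [hexp]
      _ = ((1/2)^(φ K - m) / a m) * (1/2)^j := by rw [pow_add]; ring
    have h7 : ∑' j, u (j + K) ≤ ((1/2)^(φ K - m) / a m) * 2 := by
      calc ∑' j, u (j + K) ≤ ∑' j : ℕ, ((1/2)^(φ K - m) / (a m : ℝ)) * (1/2)^j :=
            Summable.tsum_le_tsum hterm (hsumK K) (Summable.mul_left _ summable_geometric_two)
      _ = ((1/2)^(φ K - m) / (a m : ℝ)) * 2 := by rw [tsum_mul_left, tsum_geometric_two]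
    calc (a m : ℝ) * ∑' j, u (j + K) ≤ (a m : ℝ) * (((1/2)^(φ K - m) / a m) * 2) := by
          nlinarith
    _ = 2 * (1/2)^(φ K - m) := by field_simp
  -- the point x
  set r : ℝ := ∑' k, u k with hrdef
  set x : AddCircle (1:ℝ) := (r : AddCircle (1:ℝ)) with hxdef
  -- key formula for a m • x
  have hx_eq : ∀ (m K : ℕ), (∀ j, j < K → φ j ≤ m) →
      ((a m : ℤ) • x : AddCircle (1:ℝ))
        = (((a m : ℝ) * ∑' j, u (j + K) : ℝ) : AddCircle (1:ℝ)) := by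
    intro m K hK
    have h1 : (a m : ℤ) • x = (((a m : ℝ) * r : ℝ) : AddCircle (1:ℝ)) := by
      rw [hxdef]
      have : (a m : ℤ) • ((r : ℝ) : AddCircle (1:ℝ)) = (((a m : ℤ) • r : ℝ) : AddCircle (1:ℝ)) := rfl
      rw [this, zsmul_eq_mul]
      norm_num
    rw [h1, hrdef, ← Summable.sum_add_tsum_nat_add K hsum, mul_add]
    have h2 : (a m:ℝ) * (∑ j ∈ Finset.range K, u j)
        = ((∑ j ∈ Finset.range K, b j * (a m / a (φ j)) : ℕ) : ℝ) := by
      push_cast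
      rw [Finset.mul_sum]
      refine Finset.sum_congr rfl fun j hj => ?_
      have hdvd := auxAdvd ha (hK j (Finset.mem_range.mp hj))
      have hne : ((a (φ j) : ℝ)) ≠ 0 := by
        have := auxApos ha (φ j); positivity
      have hcd : ((a m / a (φ j) : ℕ) : ℝ) = (a m : ℝ) / (a (φ j)) := by
        rw [Nat.cast_div hdvd hne]
      rw [hcd, hudef]
      simp only
      ring
    rw [h2]
    set T : ℕ := ∑ j ∈ Finset.range K, b j * (a m / a (φ j))
    have h3 : (((T : ℝ)) : AddCircle (1:ℝ)) = 0 := by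
      rw [AddCircle.coe_eq_zero_iff]
      exact ⟨(T : ℤ), by simp⟩
    rw [AddCircle.coe_add, h3, zero_add]
  -- lower bound at indices φ k - 1
  have hlow : ∀ k : ℕ, 1/4 ≤ ‖((a (φ k - 1) : ℤ)) • x‖ := by
    intro k
    set m := φ k - 1 with hmdef
    have hK : ∀ j, j < k → φ j ≤ m := by
      intro j hj
      have := hφmono hj
      omega
    rw [hx_eq m k hK]
    have hsplit : ∑' j, u (j + k) = u k + ∑' j, u (j + (k + 1)) := by
      have h9 : ∑' (j:ℕ), u (j + 1 + k) = ∑' (j:ℕ), u (j + (k+1)) :=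
        tsum_congr fun j => by rw [show j + 1 + k = j + (k + 1) by omega]
      rw [Summable.tsum_eq_zero_add (hsumK k), zero_add, h9]
    have ham : (0:ℝ) < a m := by exact_mod_cast auxApos ha m
    have hAq : ((a (φ k) : ℝ)) = (q k : ℝ) * a m := by
      rw [hmdef]; exact_mod_cast haq k
    have hQ : (2:ℝ) ≤ q k := by exact_mod_cast hq2 k
    have hfirst : (a m : ℝ) * u k = (b k : ℝ) / q k := by
      rw [hudef]
      simp only
      rw [hAq]
      field_simp
    have hb_lb : (q k : ℝ) - 1 ≤ 2 * b k := by
      have hbk : b k = q k / 2 := rfl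
      have h : q k ≤ 2 * b k + 1 := by omega
      have : (q k : ℝ) ≤ 2 * b k + 1 := by exact_mod_cast h
      linarith
    have hb_ub : 2 * (b k : ℝ) ≤ q k := by
      have hbk : b k = q k / 2 := rfl
      have h : 2 * b k ≤ q k := by omega
      exact_mod_cast h
    have hfirst_lb : (1:ℝ)/4 ≤ (b k : ℝ) / q k := by
      rw [le_div_iff₀ (by linarith)]
      nlinarith
    have hfirst_ub : (b k : ℝ) / q k ≤ 1/2 := by
      rw [div_le_iff₀ (by linarith)]
      linarith
    have hm1 : m < φ (k+1) := by
      have := hφs k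
      omega
    have htail2 : (a m : ℝ) * ∑' j, u (j + (k+1)) ≤ 2 * (1/2)^(φ (k+1) - m) :=
      htail m (k+1) hm1
    have hd3 : 3 ≤ φ (k+1) - m := by
      have h1 := hφs k
      have h2 := hφ1 k
      have h3 : m = φ k - 1 := hmdef
      omega
    have hpow : ((1:ℝ)/2)^(φ (k+1) - m) ≤ (1/2)^3 :=
      pow_le_pow_of_le_one (by norm_num) (by norm_num) hd3
    have htail3 : (a m : ℝ) * ∑' j, u (j + (k+1)) ≤ 1/4 := by
      calc (a m : ℝ) * ∑' j, u (j + (k+1)) ≤ 2 * (1/2)^(φ (k+1) - m) := htail2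
      _ ≤ 2 * (1/2)^3 := by linarith
      _ = 1/4 := by norm_num
    have htail0 : 0 ≤ (a m : ℝ) * ∑' j, u (j + (k+1)) :=
      mul_nonneg ham.le (htailnn (k+1))
    have hy : (a m : ℝ) * ∑' j, u (j + k)
        = (b k : ℝ) / q k + (a m : ℝ) * ∑' j, u (j + (k+1)) := by
      rw [hsplit, mul_add, hfirst]
    apply le_trans ?_ (normCoeLb (y := (a m : ℝ) * ∑' j, u (j + k)) ?_ ?_)
    · norm_num
    · rw [hy]; linarith
    · rw [hy]; linarith
  refine ⟨x, ?_, ?_⟩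
  · -- x ∈ statChar
    intro ε hε
    obtain ⟨M0, hM0⟩ := exists_pow_lt_of_lt_one hε (by norm_num : (1:ℝ)/2 < 1)
    set M : ℕ := M0 + 1 with hMdef
    have hM1 : 1 ≤ M := by omega
    have hMε : ((1:ℝ)/2)^M < ε :=
      lt_of_le_of_lt (pow_le_pow_of_le_one (by norm_num) (by norm_num) (by omega)) hM0
    -- membership in the bad set forces proximity to the support
    have hBsub : ∀ m : ℕ, ε ≤ ‖((a m : ℤ)) • x‖ → ∃ k, m < φ k ∧ φ k ≤ m + M := by
      intro m hm
      by_contra hc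
      push_neg at hc
      have hex : ∃ k, m < φ k := ⟨m, by have := hφge m; omega⟩
      set K := Nat.find hex with hKdef
      have hK1 : m < φ K := Nat.find_spec hex
      have hK2 : ∀ j, j < K → φ j ≤ m := by
        intro j hj
        have := Nat.find_min hex hj
        omega
      have hKM : m + M < φ K := hc K hK1
      have hub : (a m : ℝ) * ∑' j, u (j + K) ≤ (1/2)^M := by
        calc (a m : ℝ) * ∑' j, u (j + K) ≤ 2 * (1/2)^(φ K - m) := htail m K hK1
        _ ≤ 2 * (1/2)^(M + 1) := by
            have hMd : M + 1 ≤ φ K - m := by omega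
            have := pow_le_pow_of_le_one (by norm_num : (0:ℝ) ≤ 1/2)
              (by norm_num) hMd
            linarith
        _ = (1/2)^M := by rw [pow_succ]; ring
      have hnn : 0 ≤ (a m : ℝ) * ∑' j, u (j + K) := by
        have : (0:ℝ) ≤ a m := Nat.cast_nonneg _
        exact mul_nonneg this (htailnn K)
      have hhalf : (a m : ℝ) * ∑' j, u (j + K) ≤ 1/2 := by
        have : ((1:ℝ)/2)^M ≤ (1/2)^1 :=
          pow_le_pow_of_le_one (by norm_num) (by norm_num) hM1
        simp only [pow_one] at this
        linarith
      rw [hx_eq m K hK2, normCoeEq hnn hhalf] at hm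
      have : ε ≤ (1/2)^M := le_trans hm hub
      linarith
    -- the counting function
    set K : ℕ → ℕ := fun n => Nat.findGreatest (fun k => φ k ≤ n) n with hKdef
    have hKgt : ∀ n, n < φ (K n + 1) := by
      intro n
      by_cases h : K n + 1 ≤ n
      · by_contra hc
        exact Nat.findGreatest_is_greatest (lt_add_one _) h (not_lt.mp hc)
      · have := hφge (K n + 1)
        omega
    -- the per-`n` count bound
    apply hZd _ (fun n => M * (K n + M + 1))
    · intro n
      rw [cnt]
      have hsub : ((Finset.Icc 1 n).filter
          (fun m => m ∈ {m : ℕ | ε ≤ ‖((fun n => ((a n : ℤ))) m) • x‖})) ⊆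
          (Finset.range (K n + M + 1)).biUnion (fun k => Finset.Ico (φ k - M) (φ k)) := by
        intro m hm
        rw [Finset.mem_filter, Finset.mem_Icc] at hm
        obtain ⟨⟨hm1, hm2⟩, hmB⟩ := hm
        obtain ⟨k, hk1, hk2⟩ := hBsub m hmB
        rw [Finset.mem_biUnion]
        have hk3 : k < K n + M + 1 := by
          by_contra hc
          push_neg at hc
          have h1 : φ (K n + 1) + M ≤ φ (M + (K n + 1)) := hφadd (K n + 1) M
          have h2 : φ (M + (K n + 1)) ≤ φ k := hφmono.monotone (by omega)
          have h3 := hKgt n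
          omega
        have hk4 : φ k - M ≤ m := by omega
        exact ⟨k, Finset.mem_range.mpr hk3, Finset.mem_Ico.mpr ⟨hk4, hk1⟩⟩
      calc ((Finset.Icc 1 n).filter _).card
          ≤ ((Finset.range (K n + M + 1)).biUnion
              (fun k => Finset.Ico (φ k - M) (φ k))).card := Finset.card_le_card hsub
      _ ≤ ∑ k ∈ Finset.range (K n + M + 1), (Finset.Ico (φ k - M) (φ k)).card :=
            Finset.card_biUnion_le
      _ ≤ ∑ k ∈ Finset.range (K n + M + 1), M := by
            apply Finset.sum_le_sum
            intro k _
            rw [Nat.card_Ico]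
            omega
      _ = M * (K n + M + 1) := by
            rw [Finset.sum_const, Finset.card_range, smul_eq_mul, mul_comm]
    · -- the tendsto statement
      rw [Metric.tendsto_atTop]
      intro ε' hε'
      set k₁ : ℕ := max (M + 1) (⌈2 * M * f 1 / ε'⌉₊ + 1) with hk₁def
      have hk₁M : M + 1 ≤ k₁ := le_max_left _ _
      have hk₁c : (⌈2 * M * f 1 / ε'⌉₊ + 1 : ℕ) ≤ k₁ := le_max_right _ _
      clear_value k₁
      clear hk₁def
      refine ⟨φ k₁, fun n hn => ?_⟩
      have hk₁n : k₁ ≤ n := le_trans (by have := hφge k₁; omega) hn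
      have hKn1 : k₁ ≤ K n := Nat.le_findGreatest hk₁n hn
      have hKn2 : φ (K n) ≤ n := Nat.findGreatest_spec (P := fun k => φ k ≤ n) hk₁n hn
      have hden : ((K n : ℝ))^2 ≤ f (g n) := hgm (K n) n hKn2
      have hKnM : M + 1 ≤ K n := le_trans hk₁M hKn1
      have hKpos : (0:ℝ) < (K n : ℝ) := by
        have : 1 ≤ K n := by omega
        exact_mod_cast Nat.lt_of_lt_of_le Nat.zero_lt_one this
      have hfgpos : (0:ℝ) < f (g n) := lt_of_lt_of_le (by positivity) hden
      have hnum_nn : (0:ℝ) ≤ (M * (K n + M + 1) : ℕ) * f 1 := by positivity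
      rw [Real.dist_0_eq_abs, abs_of_nonneg (div_nonneg hnum_nn hfgpos.le)]
      exact auxFinal hε' hf1 hden hk₁M hk₁c hKn1
  · -- x ∉ classical subgroup
    intro hx
    simp only [Set.mem_setOf_eq] at hx
    obtain ⟨Nc, hNc⟩ := eventually_atTop.mp
      (hx.eventually (gt_mem_nhds (show (0:ℝ) < 1/4 by norm_num)))
    have hge : Nc ≤ φ (Nc + 1) - 1 := by
      have := hφge (Nc + 1)
      omega
    exact absurd (hNc (φ (Nc+1) - 1) hge) (not_lt.mpr (hlow (Nc+1)))
end

section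
/- Let (a_n) be a q-bounded arithmetic sequence (ratios q_n ≤ M for some M ≥ 2). Let x ∈ 𝕋 with supp(x) = ⋃_{n≥1} [l_n, k_n] where l_n ≤ k_n < l_{n+1} − 1, and suppose the set A = {l_n : n ∈ ℕ} has positive upper f-density of weight g. Then x ∉ t^{f,g}_{(a_n)}(𝕋); specifically, for every n ∈ B = {l − 2 : l ∈ A}, ‖a_n x‖ ∈ [1/M², 1/2], and B has positive upper f-density of weight g. -/
open Filter Set

lemma myZdOfLe (f : ℝ → ℝ) (hf : IsUnboundedModulus f) (g : ℕ → ℝ) (hg : IsWeight g)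
    (A B : Set ℕ) (C : ℕ) (h : ∀ n, cnt A n ≤ cnt B n + C) (hB : B ∈ Zd f g) :
    A ∈ Zd f g := by
  have hfg : Tendsto (fun n => f (g n)) atTop atTop := hf.2.comp hg.2.1
  have hev : ∀ᶠ n in atTop, 0 < f (g n) := hfg.eventually_gt_atTop 0
  have hlim : Tendsto (fun n => f (cnt B n) / f (g n) + f C / f (g n)) atTop (nhds 0) := by
    have h2 : Tendsto (fun n => f (C : ℝ) / f (g n)) atTop (nhds 0) :=
      Tendsto.div_atTop tendsto_const_nhds hfg
    simpa using hB.add h2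
  refine tendsto_of_tendsto_of_tendsto_of_le_of_le' tendsto_const_nhds hlim ?_ ?_
  · filter_upwards [hev] with n hn
    exact div_nonneg (hf.1.1 _ (Nat.cast_nonneg _)) hn.le
  · filter_upwards [hev] with n hn
    rw [← add_div]
    have h1 : f (cnt A n) ≤ f (cnt B n) + f C := by
      calc f (cnt A n) ≤ f ((cnt B n : ℝ) + C) := by
            apply hf.1.2.2.2.1 _ _ (Nat.cast_nonneg _)
            exact_mod_cast h n
        _ ≤ f (cnt B n) + f C := hf.1.2.2.1 _ _ (Nat.cast_nonneg _) (Nat.cast_nonneg _)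
    exact div_le_div_of_nonneg_right h1 hn.le

lemma myCntSubset (A B : Set ℕ) (h : A ⊆ B) (n : ℕ) : cnt A n ≤ cnt B n := by
  classical
  unfold cnt
  apply Finset.card_le_card
  intro v hv
  simp only [Finset.mem_filter] at hv ⊢
  exact ⟨hv.1, h hv.2⟩

lemma myCntShift (l : ℕ → ℕ) (n : ℕ) :
    cnt (Set.range l) n ≤ cnt {m | m + 2 ∈ Set.range l} n + 2 := by
  classical
  unfold cnt
  set S := (Finset.Icc 1 n).filter (fun m => m ∈ Set.range l) with hS
  set T := (Finset.Icc 1 n).filter (fun m => m ∈ {m | m + 2 ∈ Set.range l}) with hT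
  have hsplit : (S.filter (fun v => 3 ≤ v)).card + (S.filter (fun v => ¬ 3 ≤ v)).card = S.card :=
    Finset.card_filter_add_card_filter_not _
  have h1 : (S.filter (fun v => 3 ≤ v)).card ≤ T.card := by
    apply Finset.card_le_card_of_injOn (fun v => v - 2)
    · intro v hv
      simp only [hS, hT, Finset.coe_filter, Finset.mem_coe, Finset.mem_filter, Finset.mem_Icc, Set.mem_setOf_eq] at hv ⊢
      obtain ⟨⟨⟨h1v, h2v⟩, hrv⟩, h3v⟩ := hv
      refine ⟨⟨by omega, by omega⟩, ?_⟩
      have e : v - 2 + 2 = v := by omega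
      rw [e]; exact hrv
    · intro v hv w hw hvw
      simp only [Finset.coe_filter, Set.mem_setOf_eq] at hv hw
      simp only at hvw
      omega
  have h2 : (S.filter (fun v => ¬ 3 ≤ v)).card ≤ 2 := by
    have hsub : S.filter (fun v => ¬ 3 ≤ v) ⊆ {1, 2} := by
      intro v hv
      simp only [hS, Finset.mem_filter, Finset.mem_Icc] at hv
      simp only [Finset.mem_insert, Finset.mem_singleton]
      omega
    calc (S.filter (fun v => ¬ 3 ≤ v)).card ≤ ({1, 2} : Finset ℕ).card :=
          Finset.card_le_card hsub
      _ = 2 := by rfl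
  omega

lemma myNorm (a : ℕ → ℕ) (ha : IsArith a) (M : ℕ) (hM : 2 ≤ M)
    (hqb : ∀ n, 1 ≤ n → a n / a (n - 1) ≤ M)
    (c : ℕ → ℕ) (hc0 : c 0 = 0) (hcb : ∀ n, 1 ≤ n → c n ≤ a n / a (n - 1) - 1)
    (m : ℕ) (h1 : c (m + 1) = 0) (h2 : c (m + 2) ≠ 0) :
    ‖((a m : ℤ)) • (((∑' n, (c n : ℝ) / (a n : ℝ)) : ℝ) : AddCircle (1 : ℝ))‖ ∈
      Set.Icc (1 / (M : ℝ) ^ 2) (1 / 2) := by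
  obtain ⟨ha0, hmono, hdvd, hq2⟩ := ha
  have hpos : ∀ n, 0 < a n := fun n => lt_of_lt_of_le (by omega) (ha0 ▸ hmono.monotone (Nat.zero_le n))
  have hposR : ∀ n, (0:ℝ) < a n := fun n => by exact_mod_cast hpos n
  have hqe : ∀ n, a (n+1) = a n * (a (n+1) / a n) := fun n => (Nat.mul_div_cancel' (hdvd n)).symm
  have hqg : ∀ n, 2 ≤ a (n+1) / a n := by
    intro n
    rw [Nat.le_div_iff_mul_le (hpos n)]
    have := hq2 n
    omega
  have hqM : ∀ n, a (n+1) / a n ≤ M := by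
    intro n
    have := hqb (n+1) (by omega)
    simpa using this
  have hcb' : ∀ n, c (n+1) + 1 ≤ a (n+1) / a n := by
    intro n
    have h := hcb (n+1) (by omega)
    simp only [Nat.add_sub_cancel] at h
    have := hqg n
    omega
  have hstep : ∀ n, (c (n+1) + 1) * a n ≤ a (n+1) := by
    intro n
    calc (c (n+1) + 1) * a n ≤ (a (n+1) / a n) * a n :=
          Nat.mul_le_mul_right _ (hcb' n)
      _ = a (n+1) := Nat.div_mul_cancel (hdvd n)
  have hterm : ∀ n, (c (n+1) : ℝ) / a (n+1) ≤ 1 / a n - 1 / a (n+1) := by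
    intro n
    have key : ((c (n+1) : ℝ) + 1) / a (n+1) ≤ 1 / a n := by
      rw [div_le_div_iff₀ (hposR _) (hposR _)]
      have := hstep n
      push_cast
      nlinarith [this, (by exact_mod_cast this : ((c (n+1) + 1) * a n : ℝ) ≤ (a (n+1) : ℝ))]
    have expand : ((c (n+1) : ℝ) + 1) / a (n+1) = (c (n+1) : ℝ)/a (n+1) + 1/a (n+1) := by
      ring
    linarith [expand ▸ key]
  have hcM : ∀ n, c n ≤ M := by
    intro n
    cases n with
    | zero => omega
    | succ k => have := hcb' k; have := hqM k; omega
  have hgeo : ∀ n, (2:ℝ)^n ≤ a n := by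
    intro n
    induction n with
    | zero => simp [ha0]
    | succ k ih =>
      have := hq2 k
      have : (2:ℝ) * a k ≤ a (k+1) := by exact_mod_cast this
      calc (2:ℝ)^(k+1) = 2 * 2^k := by ring
        _ ≤ 2 * a k := by linarith
        _ ≤ a (k+1) := this
  have hnn : ∀ n, 0 ≤ (c n : ℝ) / a n := fun n => div_nonneg (Nat.cast_nonneg _) (hposR n).le
  have hsum : Summable (fun n => (c n : ℝ) / a n) := by
    apply Summable.of_nonneg_of_le hnn (fun n => ?_)
      ((summable_geometric_two).mul_left (M:ℝ))
    have h2n : (0:ℝ) < 2^n := by positivity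
    calc (c n : ℝ) / a n ≤ (M:ℝ) / 2^n := by
          apply div_le_div₀ (by positivity) (by exact_mod_cast hcM n) h2n (hgeo n)
      _ = (M:ℝ) * (1/2)^n := by rw [one_div, inv_pow]; ring
  set F : ℕ → ℝ := fun t => (a m : ℝ) * ((c t : ℝ) / a t) with hF
  have hms : Summable F := hsum.mul_left _
  have hFnn : ∀ t, 0 ≤ F t := fun t => mul_nonneg (hposR m).le (hnn t)
  set s : ℝ := ∑' n, (c n : ℝ) / a n with hs
  have hsmul : ((a m : ℤ)) • ((s : ℝ) : AddCircle (1:ℝ)) = (((a m : ℝ) * s : ℝ) : AddCircle (1:ℝ)) := by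
    have e : ((a m : ℤ) • s : ℝ) = (a m : ℝ) * s := by
      rw [zsmul_eq_mul]; push_cast; ring
    rw [← e, ← QuotientAddGroup.mk_zsmul]
  have hsplit : (a m : ℝ) * s = (∑ i ∈ Finset.range (m+1), F i) + ∑' n, F (n + (m+1)) := by
    rw [hs, ← tsum_mul_left]
    exact (Summable.sum_add_tsum_nat_add (m+1) hms).symm
  have hchain : ∀ i j, i ≤ j → a i ∣ a j := by
    intro i j hij
    induction j with
    | zero => have : i = 0 := by omega
              simp [this]
    | succ j ih =>
      rcases Nat.lt_or_ge i (j+1) with h | h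
      · exact (ih (by omega)).trans (hdvd j)
      · have : i = j+1 := by omega
        simp [this]
  have hint : ∀ i ∈ Finset.range (m+1), F i = ((c i * (a m / a i) : ℕ) : ℝ) := by
    intro i hi
    simp only [Finset.mem_range] at hi
    have hd := hchain i m (by omega)
    have e : (a m : ℝ) = ((a m / a i : ℕ) : ℝ) * (a i : ℝ) := by
      exact_mod_cast (Nat.div_mul_cancel hd).symm
    have e2 : ((a m / a i : ℕ):ℝ) = (a m:ℝ)/(a i:ℝ) := Nat.cast_div hd (hposR i).ne'
    show (a m : ℝ) * ((c i : ℝ) / a i) = _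
    push_cast
    rw [e2]
    field_simp
  set N : ℕ := ∑ i ∈ Finset.range (m+1), c i * (a m / a i) with hN
  have hsum1 : (∑ i ∈ Finset.range (m+1), F i) = (N : ℝ) := by
    rw [hN]
    push_cast
    exact Finset.sum_congr rfl (fun i hi => by rw [hint i hi]; push_cast; ring)
  set y : ℝ := ∑' n, F (n + (m+1)) with hy
  have hNzero : (((N:ℕ):ℝ) : AddCircle (1:ℝ)) = 0 := by
    have e : ((N:ℕ):ℝ) = (N:ℤ) • (1:ℝ) := by push_cast [zsmul_eq_mul]; ring
    rw [e, QuotientAddGroup.mk_zsmul]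
    rw [AddCircle.coe_period, smul_zero]
  have hcirc : (((a m : ℝ) * s : ℝ) : AddCircle (1:ℝ)) = ((y : ℝ) : AddCircle (1:ℝ)) := by
    rw [hsplit, hsum1]
    rw [QuotientAddGroup.mk_add, hNzero, zero_add]
  -- summability of tail
  have hysum : Summable (fun n => F (n + (m+1))) := (summable_nat_add_iff (m+1)).2 hms
  -- lower bound
  have hMR : (2:ℝ) ≤ M := by exact_mod_cast hM
  have hM2 : (0:ℝ) < (M:ℝ)^2 := by positivity
  have haM : (a (m+2) : ℝ) ≤ (M:ℝ)^2 * a m := by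
    have e1 : a (m+1) ≤ a m * M := by
      calc a (m+1) = a m * (a (m+1) / a m) := hqe m
        _ ≤ a m * M := Nat.mul_le_mul_left _ (hqM m)
    have e2 : a (m+2) ≤ a (m+1) * M := by
      calc a (m+2) = a (m+1) * (a (m+2) / a (m+1)) := hqe (m+1)
        _ ≤ a (m+1) * M := Nat.mul_le_mul_left _ (hqM (m+1))
    have : a (m+2) ≤ a m * M * M := le_trans e2 (Nat.mul_le_mul_right _ e1)
    have := (by exact_mod_cast this : (a (m+2) : ℝ) ≤ (a m : ℝ) * M * M)
    nlinarith
  have hylb : 1 / (M:ℝ)^2 ≤ y := by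
    have hc2 : (1:ℝ) ≤ c (m+2) := by exact_mod_cast Nat.one_le_iff_ne_zero.2 h2
    have ht1 : 1 / (M:ℝ)^2 ≤ F (1 + (m+1)) := by
      have hidx : 1 + (m+1) = m + 2 := by omega
      have hFeval : F (m+2) = (a m:ℝ) * (c (m+2):ℝ)/(a (m+2):ℝ) := by
        show (a m : ℝ) * ((c (m+2) : ℝ) / a (m+2)) = _
        ring
      rw [hidx, hFeval, div_le_div_iff₀ hM2 (hposR _)]
      calc (1:ℝ) * a (m+2) = a (m+2) := one_mul _
        _ ≤ (M:ℝ)^2 * a m := haM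
        _ = a m * 1 * (M:ℝ)^2 := by ring
        _ ≤ a m * (c (m+2):ℝ) * (M:ℝ)^2 := by gcongr
    exact ht1.trans (Summable.le_tsum hysum 1 (fun j _ => hFnn _))
  -- upper bound
  have hFm1 : F (0 + (m+1)) = 0 := by
    simp [hF, h1]
  have hyeq : y = ∑' n, F ((n+1) + (m+1)) := by
    rw [hy, Summable.tsum_eq_zero_add hysum, hFm1, zero_add]
  have hGb : ∀ i : ℕ, F ((i+1) + (m+1)) ≤ (a m:ℝ)/a (i+(m+1)) - (a m:ℝ)/a ((i+1)+(m+1)) := by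
    intro i
    have hidx : (i+1) + (m+1) = (i+(m+1)) + 1 := by omega
    rw [hidx, hF]
    have := hterm (i+(m+1))
    calc (a m:ℝ) * ((c ((i+(m+1))+1):ℝ)/a ((i+(m+1))+1))
        ≤ (a m:ℝ) * (1/a (i+(m+1)) - 1/a ((i+(m+1))+1)) :=
          mul_le_mul_of_nonneg_left this (hposR m).le
      _ = (a m:ℝ)/a (i+(m+1)) - (a m:ℝ)/a ((i+(m+1))+1) := by ring
  have hpart : ∀ n : ℕ, ∑ i ∈ Finset.range n, F ((i+1) + (m+1)) ≤ (a m:ℝ)/a (m+1) := by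
    intro n
    calc ∑ i ∈ Finset.range n, F ((i+1) + (m+1))
        ≤ ∑ i ∈ Finset.range n, ((a m:ℝ)/a (i+(m+1)) - (a m:ℝ)/a ((i+1)+(m+1))) :=
          Finset.sum_le_sum (fun i _ => hGb i)
      _ = (a m:ℝ)/a (0+(m+1)) - (a m:ℝ)/a (n+(m+1)) :=
          Finset.sum_range_sub' (fun i => (a m:ℝ)/a (i+(m+1))) n
      _ ≤ (a m:ℝ)/a (m+1) := by
          have : (0:ℝ) ≤ (a m:ℝ)/a (n+(m+1)) := div_nonneg (hposR m).le (hposR _).le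
          simp only [Nat.zero_add]
          linarith
  have hyub : y ≤ 1/2 := by
    have h1' : y ≤ (a m:ℝ)/a (m+1) := by
      rw [hyeq]
      exact Real.tsum_le_of_sum_range_le (fun i => hFnn _) hpart
    have h2' : (a m:ℝ)/a (m+1) ≤ 1/2 := by
      rw [div_le_div_iff₀ (hposR _) (by norm_num : (0:ℝ) < 2)]
      have := hq2 m
      have : (2:ℝ) * a m ≤ a (m+1) := by exact_mod_cast this
      linarith
    linarith
  have hynn : 0 ≤ y := tsum_nonneg (fun n => hFnn _)
  -- norm computation
  rw [hsmul, hcirc, AddCircle.norm_eq]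
  simp only [inv_one, one_mul, mul_one]
  constructor
  · rcases lt_or_eq_of_le hyub with hlt | heq
    · have hr : round y = 0 := by
        rw [round_eq_zero_iff]
        constructor <;> [linarith; exact hlt]
      rw [hr]
      push_cast
      rw [sub_zero, abs_of_nonneg hynn]
      exact hylb
    · have hr : round y = 1 := by
        rw [heq]; norm_num [round_eq]
      rw [hr, heq]
      have : |(1:ℝ)/2 - (1:ℤ)| = 1/2 := by norm_num
      rw [this]
      rw [div_le_div_iff₀ hM2 (by norm_num : (0:ℝ) < 2)]
      nlinarith [hMR]
  · exact abs_sub_round y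

theorem stmt15 (f : ℝ → ℝ) (hf : IsUnboundedModulus f) (g : ℕ → ℝ) (hg : IsWeight g)
    (a : ℕ → ℕ) (ha : IsArith a) (M : ℕ) (hM : 2 ≤ M)
    (hqb : ∀ n, 1 ≤ n → a n / a (n - 1) ≤ M)
    (x : AddCircle (1 : ℝ)) (c : ℕ → ℕ) (hx : IsCanonRep a c x)
    (l k : ℕ → ℕ) (hlk : ∀ n, l n ≤ k n) (hkl : ∀ n, k n + 1 < l (n + 1))
    (hsupp : {m | c m ≠ 0} = ⋃ n : ℕ, Set.Icc (l n) (k n))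
    (hA : Set.range l ∉ Zd f g) :
    x ∉ statChar f g (fun n => (a n : ℤ)) ∧
    {m : ℕ | m + 2 ∈ Set.range l} ∉ Zd f g ∧
    ∀ m : ℕ, m + 2 ∈ Set.range l →
      ‖((a m : ℤ)) • x‖ ∈ Set.Icc (1 / (M : ℝ) ^ 2) (1 / 2) := by
  have hlmono : StrictMono l := strictMono_nat_of_lt_succ (fun n => by
    have := hlk n; have := hkl n; omega)
  have hkey : ∀ m : ℕ, m + 2 ∈ Set.range l → c (m+1) = 0 ∧ c (m+2) ≠ 0 := by
    intro m hm
    obtain ⟨j, hj⟩ := hm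
    constructor
    · by_contra hne
      have hmem1 : (m+1) ∈ {m | c m ≠ 0} := hne
      rw [hsupp] at hmem1
      obtain ⟨nn, hnn⟩ := Set.mem_iUnion.1 hmem1
      rw [Set.mem_Icc] at hnn
      have hlt : nn < j := by
        by_contra hge
        have := hlmono.monotone (by omega : j ≤ nn)
        omega
      have h1 := hlmono.monotone (by omega : nn + 1 ≤ j)
      have := hkl nn
      omega
    · have hmem2 : (m+2) ∈ ⋃ n, Set.Icc (l n) (k n) :=
        Set.mem_iUnion.2 ⟨j, Set.mem_Icc.2 ⟨by omega, by have := hlk j; omega⟩⟩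
      rw [← hsupp] at hmem2
      exact hmem2
  have h3 : ∀ m : ℕ, m + 2 ∈ Set.range l →
      ‖((a m : ℤ)) • x‖ ∈ Set.Icc (1 / (M : ℝ) ^ 2) (1 / 2) := by
    intro m hm
    rw [hx.2.2.2]
    exact myNorm a ha M hM hqb c hx.1 hx.2.1 m (hkey m hm).1 (hkey m hm).2
  have h2 : {m : ℕ | m + 2 ∈ Set.range l} ∉ Zd f g := by
    intro hB
    exact hA (myZdOfLe f hf g hg (Set.range l) {m | m + 2 ∈ Set.range l} 2
      (fun n => myCntShift l n) hB)
  refine ⟨?_, h2, h3⟩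
  intro hmem
  have hMpos : (0:ℝ) < 1 / (M:ℝ)^2 := by
    have : (0:ℝ) < M := by exact_mod_cast (by omega : 0 < M)
    positivity
  have hC := hmem (1 / (M:ℝ)^2) hMpos
  have hBsub : {m : ℕ | m + 2 ∈ Set.range l} ⊆
      {n : ℕ | 1 / (M:ℝ)^2 ≤ ‖((a n : ℤ)) • x‖} := fun m hm => (h3 m hm).1
  exact h2 (myZdOfLe f hf g hg {m | m + 2 ∈ Set.range l}
    {n : ℕ | 1 / (M:ℝ)^2 ≤ ‖((a n : ℤ)) • x‖} 0
    (fun n => by have := myCntSubset _ _ hBsub n; omega) hC)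
end

section
/- Let (a_n) be an arithmetic sequence and x ∈ 𝕋 with canonical representation x = Σ c_n/a_n. Suppose supp(x) has positive upper f-density of weight g, and there exist 0 < m₁ ≤ m₂ < 1/2 such that c_n/q_n ∈ [m₁, m₂] for all n ∈ supp(x). Then x ∉ t^{f,g}_{(a_n)}(𝕋); in fact {a_n x} ∈ [m₁, 2m₂] for all n in a set of positive upper f-density of weight g. -/
open Filter Set

open scoped Classical in
private lemma cnt_mono16 {A A' : Set ℕ} (h : A ⊆ A') (n : ℕ) : cnt A n ≤ cnt A' n := by
  classical
  simp only [cnt]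
  exact Finset.card_le_card (Finset.monotone_filter_right _ (fun m _ hm => h hm))

private lemma squeezeDiv16 {u v w : ℕ → ℝ} (hu : ∀ n, 0 ≤ u n) (huv : ∀ n, u n ≤ v n)
    (hw : ∀ n, 0 ≤ w n) (h : Filter.Tendsto (fun n => v n / w n) Filter.atTop (nhds 0)) :
    Filter.Tendsto (fun n => u n / w n) Filter.atTop (nhds 0) := by
  refine squeeze_zero (fun n => div_nonneg (hu n) (hw n)) (fun n => ?_) h
  rcases (hw n).eq_or_lt with h0 | h0
  · simp [← h0]
  · exact (div_le_div_iff_of_pos_right h0).2 (huv n)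

private lemma zd_mono16 {f : ℝ → ℝ} (hf : IsUnboundedModulus f) {g : ℕ → ℝ} (hg : IsWeight g)
    {A A' : Set ℕ} (h : A ⊆ A') (hA' : A' ∈ Zd f g) : A ∈ Zd f g := by
  refine squeezeDiv16 (fun n => hf.1.1 _ (Nat.cast_nonneg _))
    (fun n => hf.1.2.2.2.1 _ _ (Nat.cast_nonneg _) (Nat.cast_le.2 (cnt_mono16 h n)))
    (fun n => hf.1.1 _ (hg.1 n)) hA'

private lemma cnt_shift16 (c : ℕ → ℕ) (n : ℕ) :
    cnt {k | c k ≠ 0} n ≤ cnt {m | c (m + 1) ≠ 0} n + 1 := by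
  simp only [cnt]
  have key : ∀ (s t : Finset ℕ), s ⊆ Finset.image (fun m => m + 1) (insert 0 t) →
      s.card ≤ t.card + 1 := by
    intro s t h
    refine le_trans (Finset.card_le_card h) ?_
    rw [Finset.card_image_of_injective _ (add_left_injective 1)]
    exact Finset.card_insert_le _ _
  apply key
  intro m hm
  simp only [Finset.mem_filter, Finset.mem_Icc, Set.mem_setOf_eq] at hm
  obtain ⟨⟨h1, h2⟩, hc⟩ := hm
  refine Finset.mem_image.2 ⟨m - 1, ?_, by omega⟩
  rcases Nat.eq_or_lt_of_le h1 with h | h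
  · have : m - 1 = 0 := by omega
    rw [this]; exact Finset.mem_insert_self _ _
  · refine Finset.mem_insert_of_mem ?_
    simp only [Finset.mem_filter, Finset.mem_Icc, Set.mem_setOf_eq]
    refine ⟨⟨by omega, by omega⟩, ?_⟩
    have hme : m - 1 + 1 = m := by omega
    rw [hme]; exact hc

private lemma zd_shift16 {f : ℝ → ℝ} (hf : IsUnboundedModulus f) {g : ℕ → ℝ} (hg : IsWeight g)
    {c : ℕ → ℕ} (hsupp : {n | c n ≠ 0} ∉ Zd f g) : {m | c (m + 1) ≠ 0} ∉ Zd f g := by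
  intro hB
  apply hsupp
  have h2 : Filter.Tendsto (fun n => f 1 / f (g n)) Filter.atTop (nhds 0) :=
    Filter.Tendsto.div_atTop tendsto_const_nhds (hf.2.comp hg.2.1)
  have h1 : Filter.Tendsto
      (fun n => (f (cnt {m | c (m + 1) ≠ 0} n) + f 1) / f (g n)) Filter.atTop (nhds 0) := by
    have := hB.add h2
    simpa [add_div] using this
  refine squeezeDiv16 (fun n => hf.1.1 _ (Nat.cast_nonneg _)) (fun n => ?_)
    (fun n => hf.1.1 _ (hg.1 n)) h1
  calc f (cnt {n | c n ≠ 0} n)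
      ≤ f ((cnt {m | c (m + 1) ≠ 0} n : ℝ) + 1) := by
        refine hf.1.2.2.2.1 _ _ (Nat.cast_nonneg _) ?_
        have := cnt_shift16 c n
        push_cast
        exact_mod_cast this
    _ ≤ f (cnt {m | c (m + 1) ≠ 0} n) + f 1 :=
        hf.1.2.2.1 _ 1 (Nat.cast_nonneg _) zero_le_one

theorem stmt16 (f : ℝ → ℝ) (hf : IsUnboundedModulus f) (g : ℕ → ℝ) (hg : IsWeight g)
    (a : ℕ → ℕ) (ha : IsArith a)
    (x : AddCircle (1 : ℝ)) (c : ℕ → ℕ) (hx : IsCanonRep a c x)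
    (hsupp : {n | c n ≠ 0} ∉ Zd f g)
    (m₁ m₂ : ℝ) (hm₁ : 0 < m₁) (hm₁₂ : m₁ ≤ m₂) (hm₂ : m₂ < 1 / 2)
    (hm : ∀ n, c n ≠ 0 →
      m₁ ≤ (c n : ℝ) / ((a n / a (n - 1) : ℕ) : ℝ) ∧
      (c n : ℝ) / ((a n / a (n - 1) : ℕ) : ℝ) ≤ m₂) :
    x ∉ statChar f g (fun n => (a n : ℤ)) ∧
    ∃ B : Set ℕ, B ∉ Zd f g ∧ ∀ n ∈ B,
      Int.fract ((a n : ℝ) * ∑' i, (c i : ℝ) / (a i : ℝ)) ∈ Set.Icc m₁ (2 * m₂) := by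
  obtain ⟨ha0, hamono, hadvd, haq⟩ := ha
  obtain ⟨hc0, hcle, -, hxe⟩ := hx
  have apos : ∀ n, 0 < a n := by
    intro n
    have : a 0 ≤ a n := hamono.monotone (Nat.zero_le n)
    omega
  have hdvd : ∀ k m, k ≤ m → a k ∣ a m := by
    intro k m hkm
    induction m with
    | zero => simp [Nat.le_zero.mp hkm]
    | succ m ih =>
      rcases Nat.eq_or_lt_of_le hkm with h | h
      · simp [h]
      · exact (ih (Nat.lt_succ_iff.mp h)).trans (hadvd m)
  have hgrow : ∀ m k, a m * 2 ^ k ≤ a (m + k) := by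
    intro m k
    induction k with
    | zero => simp
    | succ k ih =>
      have h2 := haq (m + k)
      have h3 : a (m + (k + 1)) = a (m + k + 1) := rfl
      have h4 : a m * 2 ^ (k + 1) = 2 * (a m * 2 ^ k) := by ring
      omega
  have hqe : ∀ n, a (n - 1) * (a n / a (n - 1)) = a n :=
    fun n => Nat.mul_div_cancel' (hdvd (n - 1) n (Nat.sub_le n 1))
  have qpos : ∀ n, 0 < a n / a (n - 1) := by
    intro n
    have h1 : a (n - 1) ≤ a n := hamono.monotone (Nat.sub_le n 1)
    exact Nat.div_pos h1 (apos (n - 1))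
  have hm₂pos : 0 < m₂ := lt_of_lt_of_le hm₁ hm₁₂
  have hcm : ∀ n, (c n : ℝ) ≤ m₂ * ((a n / a (n - 1) : ℕ) : ℝ) := by
    intro n
    by_cases h : c n = 0
    · simp only [h, Nat.cast_zero]
      positivity
    · have hq0 : (0 : ℝ) < ((a n / a (n - 1) : ℕ) : ℝ) := by exact_mod_cast qpos n
      have := (hm n h).2
      rw [div_le_iff₀ hq0] at this
      linarith
  -- summability
  set F : ℕ → ℝ := fun k => (c k : ℝ) / (a k : ℝ) with hF
  have hFnn : ∀ k, 0 ≤ F k := fun k => div_nonneg (Nat.cast_nonneg _) (Nat.cast_nonneg _)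
  have hnat : ∀ k, c (k + 1) * 2 ^ k ≤ a (k + 1) := by
    intro k
    have h1 : c (k + 1) ≤ a (k + 1) / a k :=
      le_trans (by simpa using hcle (k + 1) (Nat.le_add_left 1 k)) (Nat.sub_le _ _)
    have h2 : 2 ^ k ≤ a k := by
      have := hgrow 0 k
      simpa [ha0] using this
    calc c (k + 1) * 2 ^ k ≤ (a (k + 1) / a k) * a k :=
          Nat.mul_le_mul h1 h2
      _ ≤ a (k + 1) := Nat.div_mul_le_self _ _
  have hFle : ∀ k, F k ≤ 2 * (1 / 2) ^ k := by
    intro k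
    cases k with
    | zero => simp [hF, hc0]
    | succ k =>
      have hapos : (0 : ℝ) < (a (k + 1) : ℝ) := by exact_mod_cast apos (k + 1)
      rw [hF]
      rw [div_le_iff₀ hapos]
      have h1 : (c (k + 1) : ℝ) * 2 ^ k ≤ (a (k + 1) : ℝ) := by exact_mod_cast hnat k
      have h2 : (0 : ℝ) < 2 ^ k := by positivity
      rw [show (2 : ℝ) * (1 / 2) ^ (k + 1) = (2 ^ k)⁻¹ by
        rw [one_div, inv_pow, pow_succ]; field_simp]
      rw [inv_mul_eq_div, le_div_iff₀ h2]
      linarith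
  have hFs : Summable F :=
    Summable.of_nonneg_of_le hFnn hFle
      ((summable_geometric_of_lt_one (by norm_num) (by norm_num)).mul_left 2)
  -- key computation
  have key : ∀ m, c (m + 1) ≠ 0 →
      Int.fract ((a m : ℝ) * ∑' i, (c i : ℝ) / (a i : ℝ)) ∈ Set.Icc m₁ (2 * m₂) := by
    intro m hcm1
    set G : ℕ → ℝ := fun k => (a m : ℝ) * F k with hG
    have hGs : Summable G := hFs.mul_left _
    have hGnn : ∀ k, 0 ≤ G k := fun k => mul_nonneg (Nat.cast_nonneg _) (hFnn k)
    have hGshift : Summable fun k => G (k + (m + 1)) := (summable_nat_add_iff (m + 1)).2 hGs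
    set R : ℝ := ∑' k, G (k + (m + 1)) with hR
    -- the integer part
    have hsplit : (a m : ℝ) * ∑' i, (c i : ℝ) / (a i : ℝ) =
        ((∑ k ∈ Finset.range (m + 1), (a m / a k) * c k : ℕ) : ℝ) + R := by
      have h1 : (a m : ℝ) * ∑' i, (c i : ℝ) / (a i : ℝ) = ∑' k, G k := tsum_mul_left.symm
      rw [h1, ← hGs.sum_add_tsum_nat_add (m + 1), ← hR]
      congr 1
      push_cast
      refine Finset.sum_congr rfl (fun k hk => ?_)
      have hk' : k ≤ m := Nat.lt_succ_iff.mp (Finset.mem_range.mp hk)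
      have hak : ((a k : ℝ)) ≠ 0 := by exact_mod_cast (apos k).ne'
      rw [Nat.cast_div (hdvd k m hk') hak]
      simp only [hG, hF]
      field_simp
    -- value at n = m+1
    have hq0 : (0 : ℝ) < ((a (m + 1) / a m : ℕ) : ℝ) := by exact_mod_cast qpos (m + 1)
    have haq1 : (a (m + 1) : ℝ) = (a m : ℝ) * ((a (m + 1) / a m : ℕ) : ℝ) := by
      exact_mod_cast (hqe (m + 1)).symm
    have hampos : (0 : ℝ) < (a m : ℝ) := by exact_mod_cast apos m
    have hGn : G (m + 1) = (c (m + 1) : ℝ) / ((a (m + 1) / a m : ℕ) : ℝ) := by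
      simp only [hG, hF]
      rw [haq1]
      field_simp
    have hmn := hm (m + 1) hcm1
    have hGn1 : m₁ ≤ G (m + 1) := by rw [hGn]; exact hmn.1
    have hGn2 : G (m + 1) ≤ m₂ := by rw [hGn]; exact hmn.2
    -- lower bound for R
    have hRlow : m₁ ≤ R := by
      have := hGshift.le_tsum 0 (fun j _ => hGnn _)
      simp only [zero_add] at this
      exact le_trans hGn1 this
    -- upper bound for R
    have hRsplit : R = G (m + 1) + ∑' k, G (k + 1 + (m + 1)) := by
      rw [hR, hGshift.tsum_eq_zero_add]
      simp only [zero_add]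
    have hterm : ∀ k, G (k + 1 + (m + 1)) ≤ (m₂ / 2) * (1 / 2) ^ k := by
      intro k
      have hj : k + 1 + (m + 1) = m + (k + 1) + 1 := by omega
      rw [hj]
      set j := m + (k + 1) + 1 with hjdef
      have hj1 : j - 1 = m + (k + 1) := by omega
      have hajpos : (0 : ℝ) < (a j : ℝ) := by exact_mod_cast apos j
      have hcj : (c j : ℝ) ≤ m₂ * ((a j / a (j - 1) : ℕ) : ℝ) := hcm j
      have hqj : (a (j - 1) : ℝ) * ((a j / a (j - 1) : ℕ) : ℝ) = (a j : ℝ) := by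
        exact_mod_cast hqe j
      have hqnn : (0 : ℝ) ≤ ((a j / a (j - 1) : ℕ) : ℝ) := Nat.cast_nonneg _
      have hgrw : (a m : ℝ) * 2 ^ (k + 1) ≤ (a (j - 1) : ℝ) := by
        rw [hj1]; exact_mod_cast hgrow m (k + 1)
      show (a m : ℝ) * ((c j : ℝ) / (a j : ℝ)) ≤ (m₂ / 2) * (1 / 2) ^ k
      rw [mul_div_assoc', div_le_iff₀ hajpos, ← hqj]
      have h2 : ((1 : ℝ) / 2) ^ k * 2 ^ (k + 1) = 2 := by
        rw [one_div, inv_pow, pow_succ]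
        field_simp
      have fact1 : (a m : ℝ) * (c j : ℝ) ≤ (a m : ℝ) * (m₂ * ((a j / a (j - 1) : ℕ) : ℝ)) :=
        mul_le_mul_of_nonneg_left hcj (le_of_lt hampos)
      have hcoef : (0 : ℝ) ≤ (m₂ / 2) * (1 / 2) ^ k * ((a j / a (j - 1) : ℕ) : ℝ) := by positivity
      have fact2 : ((m₂ / 2) * (1 / 2) ^ k * ((a j / a (j - 1) : ℕ) : ℝ)) * ((a m : ℝ) * 2 ^ (k + 1))
          ≤ ((m₂ / 2) * (1 / 2) ^ k * ((a j / a (j - 1) : ℕ) : ℝ)) * (a (j - 1) : ℝ) :=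
        mul_le_mul_of_nonneg_left hgrw hcoef
      have heq : (a m : ℝ) * (m₂ * ((a j / a (j - 1) : ℕ) : ℝ)) =
          ((m₂ / 2) * (1 / 2) ^ k * ((a j / a (j - 1) : ℕ) : ℝ)) * ((a m : ℝ) * 2 ^ (k + 1)) := by
        linear_combination (-(m₂ / 2) * ((a j / a (j - 1) : ℕ) : ℝ) * (a m : ℝ)) * h2
      calc (a m : ℝ) * (c j : ℝ) ≤ _ := fact1
        _ = _ := heq
        _ ≤ _ := fact2
        _ = (m₂ / 2) * (1 / 2) ^ k * ((a (j - 1) : ℝ) * ((a j / a (j - 1) : ℕ) : ℝ)) := by ring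
    have hsum2 : Summable fun k => G (k + 1 + (m + 1)) := by
      have h := (summable_nat_add_iff (m + 2)).2 hGs
      refine h.congr (fun k => ?_)
      congr 1
      omega
    have hsumgeo : Summable fun k => (m₂ / 2) * ((1 : ℝ) / 2) ^ k :=
      (summable_geometric_of_lt_one (by norm_num) (by norm_num)).mul_left _
    have hT : ∑' k, G (k + 1 + (m + 1)) ≤ m₂ := by
      refine le_trans (Summable.tsum_le_tsum hterm hsum2 hsumgeo) ?_
      rw [tsum_mul_left, tsum_geometric_of_lt_one (by norm_num) (by norm_num)]
      norm_num
    have hRhigh : R ≤ 2 * m₂ := by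
      rw [hRsplit]
      linarith
    -- conclude
    rw [hsplit]
    have hzz : ((∑ k ∈ Finset.range (m + 1), (a m / a k) * c k : ℕ) : ℝ) =
        (((∑ k ∈ Finset.range (m + 1), (a m / a k) * c k : ℕ) : ℤ) : ℝ) := by push_cast; rfl
    rw [hzz, Int.fract_intCast_add, Int.fract_eq_self.2 ⟨by linarith, by linarith [hm₂]⟩]
    exact ⟨hRlow, hRhigh⟩
  -- conclusions
  have hB : {m | c (m + 1) ≠ 0} ∉ Zd f g := zd_shift16 hf hg hsupp
  constructor
  · intro hmem
    have hε : (0 : ℝ) < min m₁ (1 - 2 * m₂) := by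
      apply lt_min hm₁
      linarith
    have hA' := hmem (min m₁ (1 - 2 * m₂)) hε
    refine hB (zd_mono16 hf hg (fun m hmB => ?_) hA')
    simp only [Set.mem_setOf_eq] at hmB ⊢
    -- norm bound
    have hy := key m hmB
    set y := (a m : ℝ) * ∑' i, (c i : ℝ) / (a i : ℝ) with hydef
    have hxy : ((a m : ℕ) : ℤ) • x = (y : AddCircle (1 : ℝ)) := by
      rw [hxe]
      have hcast : (((a m : ℕ) : ℤ) : ℝ) * (∑' i, (c i : ℝ) / (a i : ℝ)) = y := by
        rw [hydef]; push_cast; ring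
      rw [← hcast, ← zsmul_eq_mul]
      rfl
    rw [hxy, AddCircle.norm_eq]
    simp only [inv_one, one_mul, mul_one]
    -- |y - round y| ≥ min
    have hfr1 : m₁ ≤ Int.fract y := hy.1
    have hfr2 : Int.fract y ≤ 2 * m₂ := hy.2
    have hfloor : Int.fract y = y - (⌊y⌋ : ℝ) := rfl
    set z : ℤ := round y with hz
    rcases lt_trichotomy z ⌊y⌋ with h | h | h
    · have hzle : (z : ℝ) ≤ (⌊y⌋ : ℝ) - 1 := by exact_mod_cast Int.le_sub_one_of_lt h
      refine le_trans ?_ (le_abs_self _)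
      have h1 : Int.fract y ≤ 1 := by linarith [hfr2, hm₂]
      calc min m₁ (1 - 2 * m₂) ≤ 1 - 2 * m₂ := min_le_right _ _
        _ ≤ y - z := by
            have := hfloor
            linarith [hfr1, hm₁, hm₂]
    · refine le_trans ?_ (le_abs_self _)
      rw [h]
      calc min m₁ (1 - 2 * m₂) ≤ m₁ := min_le_left _ _
        _ ≤ y - (⌊y⌋ : ℝ) := by rw [← hfloor]; exact hfr1
    · have hzge : (⌊y⌋ : ℝ) + 1 ≤ (z : ℝ) := by exact_mod_cast h
      rw [abs_sub_comm]
      refine le_trans ?_ (le_abs_self _)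
      calc min m₁ (1 - 2 * m₂) ≤ 1 - 2 * m₂ := min_le_right _ _
        _ ≤ (z : ℝ) - y := by linarith [hfr2, hfloor]
  · exact ⟨{m | c (m + 1) ≠ 0}, hB, fun m hmB => key m hmB⟩
end

section
/- Let (a_n) be an arithmetic sequence and B ⊆ ℕ. There exists x ∈ 𝕋 with supp(x) ⊆ B and x ∉ t^{f,g}_{(a_n)}(𝕋) if and only if B has positive upper f-density of weight g. -/
open Filter Set

namespace Stmt17Aux

/-! ### Basic facts about arithmetic sequences -/

lemma a_pos {a : ℕ → ℕ} (ha : IsArith a) (n : ℕ) : 0 < a n := by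
  have h := ha.2.1.monotone (Nat.zero_le n)
  have h0 := ha.1
  omega

lemma a_dvd {a : ℕ → ℕ} (ha : IsArith a) {m n : ℕ} (h : m ≤ n) : a m ∣ a n := by
  induction n, h using Nat.le_induction with
  | base => exact dvd_rfl
  | succ n hmn ih => exact ih.trans (ha.2.2.1 n)

lemma a_growth {a : ℕ → ℕ} (ha : IsArith a) (m k : ℕ) : a m * 2 ^ k ≤ a (m + k) := by
  induction k with
  | zero => simp
  | succ k ih =>
      have h := ha.2.2.2 (m + k)
      calc a m * 2 ^ (k + 1) = (a m * 2 ^ k) * 2 := by ring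
        _ ≤ a (m + k) * 2 := by exact Nat.mul_le_mul_right 2 ih
        _ ≤ a (m + k + 1) := by omega

lemma a_real_pos {a : ℕ → ℕ} (ha : IsArith a) (n : ℕ) : (0 : ℝ) < a n := by
  exact_mod_cast a_pos ha n

lemma q_ge_two {a : ℕ → ℕ} (ha : IsArith a) {n : ℕ} (hn : 1 ≤ n) :
    2 ≤ a n / a (n - 1) := by
  have h2 : 2 * a (n - 1) ≤ a n := by
    have := ha.2.2.2 (n - 1)
    rwa [Nat.sub_add_cancel hn] at this
  exact (Nat.le_div_iff_mul_le (a_pos ha (n - 1))).2 (by omega)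

lemma q_mul {a : ℕ → ℕ} (ha : IsArith a) {n : ℕ} (hn : 1 ≤ n) :
    a n / a (n - 1) * a (n - 1) = a n := by
  apply Nat.div_mul_cancel
  have := ha.2.2.1 (n - 1)
  rwa [Nat.sub_add_cancel hn] at this

/-! ### Tail sums of a canonical-type representation -/

variable (a) in
/-- The tail `∑_{m > N} c m / a m`. -/
noncomputable def tl (a c : ℕ → ℕ) (N : ℕ) : ℝ :=
  ∑' m, (c (m + (N + 1)) : ℝ) / (a (m + (N + 1)) : ℝ)

section Rep

variable {a c : ℕ → ℕ} (ha : IsArith a)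
  (hc : ∀ n, 1 ≤ n → c n ≤ a n / a (n - 1) - 1) (hc0 : c 0 = 0)

include ha hc in
lemma cb {n : ℕ} (hn : 1 ≤ n) : (c n + 1) * a (n - 1) ≤ a n := by
  have hq2 := q_ge_two ha hn
  have hqm := q_mul ha hn
  have hcn := hc n hn
  have h1 : c n + 1 ≤ a n / a (n - 1) := by omega
  calc (c n + 1) * a (n - 1) ≤ a n / a (n - 1) * a (n - 1) :=
        Nat.mul_le_mul_right _ h1
    _ = a n := hqm

include ha hc in
lemma term_le {n : ℕ} (hn : 1 ≤ n) :
    (c n : ℝ) / a n ≤ 1 / a (n - 1) - 1 / a n := by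
  have h1 : ((c n : ℝ) + 1) / a n ≤ 1 / a (n - 1) := by
    rw [div_le_div_iff₀ (a_real_pos ha n) (a_real_pos ha (n - 1))]
    have h0 : (((c n + 1) * a (n - 1) : ℕ) : ℝ) ≤ ((a n : ℕ) : ℝ) :=
      Nat.cast_le.2 (cb ha hc hn)
    push_cast at h0
    nlinarith [h0]
  have h2 : (c n : ℝ) / a n + 1 / a n = ((c n : ℝ) + 1) / a n := by ring
  linarith

include ha hc hc0 in
lemma term_le' (n : ℕ) : (c n : ℝ) / a n ≤ (1 / 2 : ℝ) ^ (n - 1) := by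
  rcases Nat.eq_zero_or_pos n with rfl | hn
  · simp [hc0]
  · have h1 := term_le ha hc hn
    have hg' : (2 : ℝ) ^ (n - 1) ≤ (a (n - 1) : ℝ) := by
      have h := a_growth ha 0 (n - 1)
      rw [ha.1, one_mul, Nat.zero_add] at h
      exact_mod_cast h
    have h2 : (1 : ℝ) / a (n - 1) ≤ (1 / 2 : ℝ) ^ (n - 1) := by
      rw [one_div_pow]
      exact one_div_le_one_div_of_le (by positivity) hg'
    have h3 : (0 : ℝ) < 1 / a n := by
      have := a_real_pos ha n; positivity
    linarith

include ha hc hc0 in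
lemma summable_rep : Summable (fun n => (c n : ℝ) / a n) := by
  have hgeo : Summable (fun n : ℕ => (1 / 2 : ℝ) ^ (n - 1)) := by
    have h1 : Summable (fun n : ℕ => (1 / 2 : ℝ) ^ ((n + 1) - 1)) := by
      simpa using (summable_geometric_two)
    exact (summable_nat_add_iff 1).1 h1
  exact Summable.of_nonneg_of_le
    (fun n => by have := a_real_pos ha n; positivity)
    (term_le' ha hc hc0) hgeo

include ha hc hc0 in
lemma summable_tail (N : ℕ) :
    Summable (fun m => (c (m + (N + 1)) : ℝ) / a (m + (N + 1))) :=
  (summable_nat_add_iff (f := fun n => (c n : ℝ) / a n) (N + 1)).2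
    (summable_rep ha hc hc0)

include ha hc hc0 in
lemma tl_nonneg (N : ℕ) : 0 ≤ tl a c N := by
  apply tsum_nonneg
  intro m
  have := a_real_pos ha (m + (N + 1))
  positivity

include ha hc hc0 in
lemma tl_le (N : ℕ) : tl a c N ≤ 1 / a N := by
  apply Summable.tsum_le_of_sum_le (summable_tail ha hc hc0 N)
  intro s
  obtain ⟨M, hM⟩ := s.exists_nat_subset_range
  have hterm : ∀ m : ℕ, (c (m + (N + 1)) : ℝ) / a (m + (N + 1)) ≤
      1 / a (N + m) - 1 / a (N + m + 1) := by
    intro m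
    have h := term_le ha hc (n := N + m + 1) (by omega)
    rw [show N + m + 1 - 1 = N + m by omega] at h
    rw [show m + (N + 1) = N + m + 1 by omega]
    exact h
  calc ∑ m ∈ s, (c (m + (N + 1)) : ℝ) / a (m + (N + 1))
      ≤ ∑ m ∈ Finset.range M, (c (m + (N + 1)) : ℝ) / a (m + (N + 1)) := by
        apply Finset.sum_le_sum_of_subset_of_nonneg hM
        intro m _ _
        have := a_real_pos ha (m + (N + 1)); positivity
    _ ≤ ∑ m ∈ Finset.range M, (1 / (a (N + m) : ℝ) - 1 / a (N + m + 1)) :=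
        Finset.sum_le_sum (fun m _ => hterm m)
    _ = 1 / a (N + 0) - 1 / a (N + M) := by
        exact Finset.sum_range_sub' (fun i => 1 / (a (N + i) : ℝ)) M
    _ ≤ 1 / a N := by
        have := a_real_pos ha (N + M)
        have h0 : (1 : ℝ) / a (N + M) ≥ 0 := by positivity
        simp only [Nat.add_zero]
        linarith

include ha hc hc0 in
lemma tl_rec (N : ℕ) :
    tl a c N = (c (N + 1) : ℝ) / a (N + 1) + tl a c (N + 1) := by
  have h := Summable.tsum_eq_zero_add (summable_tail ha hc hc0 N)
  unfold tl
  rw [h]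
  congr 1
  · norm_num
  · apply tsum_congr
    intro b
    have hb : b + 1 + (N + 1) = b + (N + 1 + 1) := by omega
    rw [hb]

include ha hc hc0 in
lemma tl_eq_of_zero (N : ℕ) (k : ℕ)
    (h : ∀ j, 1 ≤ j → j ≤ k → c (N + j) = 0) : tl a c N = tl a c (N + k) := by
  induction k with
  | zero => rfl
  | succ k ih =>
      have h1 : tl a c N = tl a c (N + k) := ih (fun j hj1 hj2 => h j hj1 (by omega))
      have h2 : c (N + k + 1) = 0 := h (k + 1) (by omega) le_rfl
      rw [h1, tl_rec ha hc hc0 (N + k), h2]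
      rw [Nat.cast_zero, zero_div, zero_add]
      rfl

include ha in
lemma sum_int (N : ℕ) :
    ∃ K : ℤ, (a N : ℝ) * (∑ m ∈ Finset.range (N + 1), (c m : ℝ) / a m) = K := by
  refine ⟨((∑ m ∈ Finset.range (N + 1), c m * (a N / a m) : ℕ) : ℤ), ?_⟩
  have h1 : (a N : ℝ) * (∑ m ∈ Finset.range (N + 1), (c m : ℝ) / a m)
      = ∑ m ∈ Finset.range (N + 1), (c m : ℝ) * ((a N / a m : ℕ) : ℝ) := by
    rw [Finset.mul_sum]
    apply Finset.sum_congr rfl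
    intro m hm
    have hm' : m ≤ N := by
      have := Finset.mem_range.1 hm; omega
    have hd : a m ∣ a N := a_dvd ha hm'
    rw [Nat.cast_div hd (by exact_mod_cast (a_pos ha m).ne')]
    ring
  rw [h1]
  push_cast
  rfl

include ha hc hc0 in
lemma smul_eq (N : ℕ) :
    ((a N : ℤ) • (((∑' n, (c n : ℝ) / (a n : ℝ)) : ℝ) : AddCircle (1 : ℝ)))
      = (((a N : ℝ) * tl a c N : ℝ) : AddCircle (1 : ℝ)) := by
  set σ : ℝ := ∑' n, (c n : ℝ) / (a n : ℝ) with hσ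
  have hs : σ = (∑ m ∈ Finset.range (N + 1), (c m : ℝ) / a m) + tl a c N := by
    rw [hσ]
    exact ((summable_rep ha hc hc0).sum_add_tsum_nat_add (N + 1)).symm
  obtain ⟨K, hK⟩ := sum_int ha (c := c) N
  have h1 : ((a N : ℤ) • ((σ : ℝ) : AddCircle (1 : ℝ)))
      = ((((a N : ℤ) : ℝ) * σ : ℝ) : AddCircle (1 : ℝ)) := by
    rw [← AddCircle.coe_zsmul]
    norm_num
  rw [h1]
  have h2 : (((a N : ℤ) : ℝ)) * σ = (K : ℝ) + (a N : ℝ) * tl a c N := by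
    rw [hs, mul_add]
    push_cast
    rw [hK]
  rw [h2, AddCircle.coe_add]
  have h3 : (((K : ℝ)) : AddCircle (1 : ℝ)) = 0 := by
    rw [AddCircle.coe_eq_zero_iff]
    exact ⟨K, by simp⟩
  rw [h3, zero_add]

end Rep

/-! ### Norm estimates on the circle -/

lemma norm_coe_le (y : ℝ) : ‖((y : ℝ) : AddCircle (1 : ℝ))‖ ≤ |y| := by
  rw [AddCircle.norm_eq]
  simpa using round_le y 0

lemma norm_coe_ge {y : ℝ} (h1 : 1 / 3 ≤ y) (h2 : y ≤ 3 / 4) :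
    1 / 4 ≤ ‖((y : ℝ) : AddCircle (1 : ℝ))‖ := by
  rw [AddCircle.norm_eq]
  simp only [inv_one, one_mul, mul_one]
  rcases le_or_gt ((round y : ℤ) : ℝ) 0 with h | h
  · rw [abs_of_nonneg (by linarith)]
    linarith
  · have h' : (1 : ℝ) ≤ ((round y : ℤ) : ℝ) := by
      exact_mod_cast (by exact_mod_cast h : (0 : ℤ) < round y)
    rw [abs_of_nonpos (by linarith)]
    linarith


/-! ### Modulus function facts -/

section Modulus

variable {f : ℝ → ℝ} (hf : IsUnboundedModulus f)

include hf in
lemma f_nonneg {x : ℝ} (hx : 0 ≤ x) : 0 ≤ f x := hf.1.1 x hx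

include hf in
lemma f_zero : f 0 = 0 := (hf.1.2.1 0 le_rfl).2 rfl

include hf in
lemma f_mono {x y : ℝ} (hx : 0 ≤ x) (hxy : x ≤ y) : f x ≤ f y :=
  hf.1.2.2.2.1 x y hx hxy

include hf in
lemma f_subadd {x y : ℝ} (hx : 0 ≤ x) (hy : 0 ≤ y) : f (x + y) ≤ f x + f y :=
  hf.1.2.2.1 x y hx hy

include hf in
lemma f_mul_nat (k : ℕ) {x : ℝ} (hx : 0 ≤ x) : f ((k : ℝ) * x) ≤ (k : ℝ) * f x := by
  induction k with
  | zero => simp [f_zero hf]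
  | succ k ih =>
      have h1 : ((k : ℝ) + 1) * x = (k : ℝ) * x + x := by ring
      push_cast
      rw [h1]
      have h2 := f_subadd hf (by positivity : (0:ℝ) ≤ (k : ℝ) * x) hx
      have h3 : (k : ℝ) * f x + f x = ((k : ℝ) + 1) * f x := by ring
      linarith

end Modulus

/-! ### Counting facts -/

open scoped Classical in
lemma cnt_mono {A A' : Set ℕ} (h : A ⊆ A') (n : ℕ) : cnt A n ≤ cnt A' n := by
  unfold cnt
  apply Finset.card_le_card
  intro m hm
  simp only [Finset.mem_filter] at hm ⊢
  exact ⟨hm.1, h hm.2⟩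

open scoped Classical in
lemma cnt_add_le (A : Set ℕ) (n j : ℕ) : cnt A (n + j) ≤ cnt A n + j := by
  unfold cnt
  have hsplit : Finset.Icc 1 (n + j) = Finset.Icc 1 n ∪ Finset.Ioc n (n + j) := by
    ext m
    simp only [Finset.mem_Icc, Finset.mem_union, Finset.mem_Ioc]
    omega
  rw [hsplit, Finset.filter_union]
  calc ((Finset.Icc 1 n).filter (fun m => m ∈ A) ∪
        (Finset.Ioc n (n + j)).filter (fun m => m ∈ A)).card
      ≤ ((Finset.Icc 1 n).filter (fun m => m ∈ A)).card
        + ((Finset.Ioc n (n + j)).filter (fun m => m ∈ A)).card :=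
        Finset.card_union_le _ _
    _ ≤ ((Finset.Icc 1 n).filter (fun m => m ∈ A)).card + j := by
        have h1 : ((Finset.Ioc n (n + j)).filter (fun m => m ∈ A)).card
            ≤ (Finset.Ioc n (n + j)).card := Finset.card_filter_le _ _
        have h2 : (Finset.Ioc n (n + j)).card = j := by
          rw [Nat.card_Ioc]; omega
        omega

open scoped Classical in
lemma cnt_shift_le (A : Set ℕ) (j n : ℕ) :
    cnt {m | m + j ∈ A} n ≤ cnt A (n + j) := by
  unfold cnt
  apply Finset.card_le_card_of_injOn (fun m => m + j)
  · intro m hm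
    simp only [Finset.mem_coe, Finset.mem_filter, Finset.mem_Icc, Set.mem_setOf_eq] at hm ⊢
    exact ⟨⟨by omega, by omega⟩, hm.2⟩
  · intro x _ y _ hxy
    exact Nat.add_right_cancel hxy

open scoped Classical in
lemma cnt_le_sum {S B : Set ℕ} (k : ℕ)
    (h : ∀ m, m ∈ S → ∃ j, 1 ≤ j ∧ j ≤ k ∧ m + j ∈ B) (n : ℕ) :
    cnt S n ≤ k * (cnt B n + k) := by
  have h1 : (Finset.Icc 1 n).filter (fun m => m ∈ S) ⊆
      (Finset.Icc 1 k).biUnion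
        (fun j => (Finset.Icc 1 n).filter (fun m => m ∈ {m | m + j ∈ B})) := by
    intro m hm
    simp only [Finset.mem_filter, Finset.mem_Icc, Finset.mem_biUnion,
      Set.mem_setOf_eq] at hm ⊢
    obtain ⟨j, hj1, hj2, hjB⟩ := h m hm.2
    exact ⟨j, ⟨hj1, hj2⟩, hm.1, hjB⟩
  have h2 : cnt S n ≤ ∑ j ∈ Finset.Icc 1 k, cnt {m | m + j ∈ B} n := by
    unfold cnt
    calc ((Finset.Icc 1 n).filter (fun m => m ∈ S)).card
        ≤ ((Finset.Icc 1 k).biUnion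
            (fun j => (Finset.Icc 1 n).filter (fun m => m ∈ {m | m + j ∈ B}))).card :=
          Finset.card_le_card h1
      _ ≤ ∑ j ∈ Finset.Icc 1 k,
            ((Finset.Icc 1 n).filter (fun m => m ∈ {m | m + j ∈ B})).card :=
          Finset.card_biUnion_le
  have h3 : ∀ j ∈ Finset.Icc 1 k, cnt {m | m + j ∈ B} n ≤ cnt B n + k := by
    intro j hj
    have hj' : j ≤ k := by
      have := Finset.mem_Icc.1 hj; omega
    calc cnt {m | m + j ∈ B} n ≤ cnt B (n + j) := cnt_shift_le B j n
      _ ≤ cnt B n + j := cnt_add_le B n j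
      _ ≤ cnt B n + k := by omega
  calc cnt S n ≤ ∑ j ∈ Finset.Icc 1 k, cnt {m | m + j ∈ B} n := h2
    _ ≤ ∑ _j ∈ Finset.Icc 1 k, (cnt B n + k) := Finset.sum_le_sum h3
    _ = k * (cnt B n + k) := by
        rw [Finset.sum_const, smul_eq_mul, Nat.card_Icc]
        norm_num

/-! ### The zero-density ideal -/

section ZdFacts

variable {f : ℝ → ℝ} {g : ℕ → ℝ} (hf : IsUnboundedModulus f) (hg : IsWeight g)

include hf hg in
lemma fg_atTop : Tendsto (fun n => f (g n)) atTop atTop :=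
  hf.2.comp hg.2.1

include hf hg in
lemma Zd_of_le {A A' : Set ℕ} (C1 C2 : ℝ) (hC1 : 0 ≤ C1)
    (h : ∀ n, f (cnt A' n) ≤ C1 * f (cnt A n) + C2) (hA : A ∈ Zd f g) :
    A' ∈ Zd f g := by
  have hAt := fg_atTop hf hg
  have hpos : ∀ᶠ n in atTop, 0 < f (g n) := hAt.eventually_gt_atTop 0
  have hA' : Tendsto (fun n => f (cnt A n) / f (g n)) atTop (nhds 0) := hA
  have hup : Tendsto (fun n => C1 * (f (cnt A n) / f (g n)) + C2 / f (g n))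
      atTop (nhds 0) := by
    have h1 : Tendsto (fun n => C1 * (f (cnt A n) / f (g n))) atTop (nhds 0) := by
      simpa using hA'.const_mul C1
    have h2 : Tendsto (fun n => C2 / f (g n)) atTop (nhds 0) :=
      Tendsto.div_atTop tendsto_const_nhds hAt
    simpa using h1.add h2
  refine squeeze_zero' ?_ ?_ hup
  · filter_upwards [hpos] with n hn
    exact div_nonneg (f_nonneg hf (Nat.cast_nonneg _)) hn.le
  · filter_upwards [hpos] with n hn
    calc f (cnt A' n) / f (g n) ≤ (C1 * f (cnt A n) + C2) / f (g n) := by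
          gcongr
          exact h n
      _ = C1 * (f (cnt A n) / f (g n)) + C2 / f (g n) := by
          rw [add_div, mul_div_assoc]

include hf hg in
lemma Zd_mono {A A' : Set ℕ} (h : A ⊆ A') (hA' : A' ∈ Zd f g) : A ∈ Zd f g := by
  apply Zd_of_le hf hg 1 0 zero_le_one (A := A') _ hA'
  intro n
  have := cnt_mono h n
  have hle : ((cnt A n : ℕ) : ℝ) ≤ ((cnt A' n : ℕ) : ℝ) := by exact_mod_cast this
  have := f_mono hf (Nat.cast_nonneg _) hle
  linarith

end ZdFacts


/-! ### Greedy selection of a non-consecutive subset -/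

open scoped Classical in
/-- Greedy selection: pick `n+1` iff `n+1 ∈ B` and `n` was not picked. -/
noncomputable def pick (B : Set ℕ) : ℕ → Bool
  | 0 => false
  | (n + 1) => if (n + 1) ∈ B ∧ pick B n = false then true else false

lemma pick_zero (B : Set ℕ) : pick B 0 = false := rfl

lemma pick_mem {B : Set ℕ} {n : ℕ} (h : pick B n = true) : n ∈ B := by
  cases n with
  | zero => simp [pick] at h
  | succ n =>
      rw [pick] at h
      split at h
      · exact (by assumption : (n + 1) ∈ B ∧ _).1
      · simp at h

lemma pick_succ_false {B : Set ℕ} {n : ℕ} (h : pick B n = true) :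
    pick B (n + 1) = false := by
  rw [pick]
  split
  · next hsp => rw [h] at hsp; simp at hsp
  · rfl

lemma pick_succ_true {B : Set ℕ} {n : ℕ} (hB : (n + 1) ∈ B)
    (h : pick B n = false) : pick B (n + 1) = true := by
  rw [pick]
  split
  · rfl
  · next hsp => exact absurd ⟨hB, h⟩ hsp

open scoped Classical in
lemma cnt_le_two_mul_pick (B : Set ℕ) (n : ℕ) :
    cnt B n ≤ 2 * cnt {m | pick B m = true} n := by
  unfold cnt
  set F := (Finset.Icc 1 n).filter (fun m => m ∈ B) with hF
  set G := (Finset.Icc 1 n).filter (fun m => m ∈ {m | pick B m = true}) with hG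
  have key : ∀ m ∈ F, (if pick B m = true then m else m - 1) ∈ G := by
    intro m hm
    simp only [hF, Finset.mem_filter, Finset.mem_Icc] at hm
    obtain ⟨⟨hm1, hm2⟩, hmB⟩ := hm
    by_cases hp : pick B m = true
    · rw [if_pos hp]
      simp only [hG, Finset.mem_filter, Finset.mem_Icc, Set.mem_setOf_eq]
      exact ⟨⟨hm1, hm2⟩, hp⟩
    · have hm1' : 2 ≤ m := by
        rcases Nat.lt_or_ge m 2 with h2 | h2
        · interval_cases m
          · exact absurd (pick_succ_true hmB (pick_zero B)) hp
        · exact h2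
      have hmm : m - 1 + 1 = m := by omega
      have hprev : pick B (m - 1) = true := by
        by_contra hq
        have := pick_succ_true (by rw [hmm]; exact hmB)
          (by simpa using eq_false_of_ne_true hq)
        rw [hmm] at this
        exact hp this
      rw [if_neg hp]
      simp only [hG, Finset.mem_filter, Finset.mem_Icc, Set.mem_setOf_eq]
      exact ⟨⟨by omega, by omega⟩, hprev⟩
  have hfib : F.card ≤ 2 * (F.image (fun m => if pick B m = true then m else m - 1)).card := by
    apply Finset.card_le_mul_card_image
    intro b _
    have hsub : F.filter (fun x => (if pick B x = true then x else x - 1) = b)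
        ⊆ {b, b + 1} := by
      intro m hm
      simp only [Finset.mem_filter] at hm
      obtain ⟨hmF, hmb⟩ := hm
      have hm1 : 1 ≤ m := by
        simp only [hF, Finset.mem_filter, Finset.mem_Icc] at hmF
        exact hmF.1.1
      simp only [Finset.mem_insert, Finset.mem_singleton]
      by_cases hp : pick B m = true
      · left; rw [if_pos hp] at hmb; omega
      · right; rw [if_neg hp] at hmb; omega
    calc (F.filter (fun x => (if pick B x = true then x else x - 1) = b)).card
        ≤ ({b, b + 1} : Finset ℕ).card := Finset.card_le_card hsub
      _ ≤ 2 := Finset.card_insert_le _ _ |>.trans (by simp)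
  have himg : (F.image (fun m => if pick B m = true then m else m - 1)) ⊆ G :=
    Finset.image_subset_iff.2 key
  have hGc : (F.image (fun m => if pick B m = true then m else m - 1)).card
      ≤ G.card := Finset.card_le_card himg
  have final : F.card ≤ 2 * G.card := by omega
  convert final using 3 <;> congr!

open scoped Classical in
lemma pick_le_cnt_shift (B : Set ℕ) (n : ℕ) :
    cnt {m | pick B m = true} n ≤ cnt {m | pick B (m + 1) = true} n + 1 := by
  unfold cnt
  set G := (Finset.Icc 1 n).filter (fun m => m ∈ {m | pick B m = true}) with hG
  set S := (Finset.Icc 1 n).filter (fun m => m ∈ {m | pick B (m + 1) = true}) with hS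
  have key : ∀ m ∈ G, m - 1 ∈ insert 0 S := by
    intro m hm
    simp only [hG, Finset.mem_filter, Finset.mem_Icc, Set.mem_setOf_eq] at hm
    obtain ⟨⟨hm1, hm2⟩, hp⟩ := hm
    rcases Nat.eq_or_lt_of_le hm1 with h1 | h1
    · simp [← h1]
    · apply Finset.mem_insert_of_mem
      simp only [hS, Finset.mem_filter, Finset.mem_Icc, Set.mem_setOf_eq]
      refine ⟨⟨by omega, by omega⟩, ?_⟩
      have : m - 1 + 1 = m := by omega
      rw [this]
      exact hp
  have hinj : Set.InjOn (fun m => m - 1) G := by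
    intro x hx y hy hxy
    simp only [hG, Finset.coe_filter, Set.mem_setOf_eq, Finset.mem_Icc] at hx hy
    have hxy' : x - 1 = y - 1 := hxy
    omega
  have h1 := Finset.card_le_card_of_injOn (fun m => m - 1) key hinj
  have h2 := Finset.card_insert_le 0 S
  have final : G.card ≤ S.card + 1 := le_trans h1 h2
  convert final using 3 <;> congr!


end Stmt17Aux

open Stmt17Aux

theorem stmt17 (f : ℝ → ℝ) (hf : IsUnboundedModulus f) (g : ℕ → ℝ) (hg : IsWeight g)
    (a : ℕ → ℕ) (ha : IsArith a) (B : Set ℕ) :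
    (∃ (x : AddCircle (1 : ℝ)) (c : ℕ → ℕ), IsCanonRep a c x ∧
        {n | c n ≠ 0} ⊆ B ∧ x ∉ statChar f g (fun n => (a n : ℤ))) ↔
      B ∉ Zd f g := by
  constructor
  · rintro ⟨x, c, ⟨hc0, hc, _hinf, hxeq⟩, hsupp, hx⟩ hB
    apply hx
    simp only [statChar, Set.mem_setOf_eq]
    intro ε hε
    obtain ⟨k, hk⟩ := exists_pow_lt_of_lt_one hε (by norm_num : (1/2 : ℝ) < 1)
    have key : ∀ m, m ∈ {n : ℕ | ε ≤ ‖((a n : ℤ)) • x‖} →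
        ∃ j, 1 ≤ j ∧ j ≤ k ∧ m + j ∈ B := by
      intro m hm
      by_contra hcon
      push_neg at hcon
      have hz : ∀ j, 1 ≤ j → j ≤ k → c (m + j) = 0 := by
        intro j hj1 hj2
        by_contra hne
        exact hcon j hj1 hj2 (hsupp hne)
      have htl : tl a c m = tl a c (m + k) := tl_eq_of_zero ha hc hc0 m k hz
      have hsm := smul_eq ha hc hc0 m
      simp only [Set.mem_setOf_eq, hxeq] at hm
      rw [hsm] at hm
      have hnorm := norm_coe_le ((a m : ℝ) * tl a c m)
      have htl0 : 0 ≤ tl a c m := tl_nonneg ha hc hc0 m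
      have hb1 : (a m : ℝ) * tl a c m ≤ (1/2 : ℝ)^k := by
        rw [htl]
        have h1 : tl a c (m + k) ≤ 1 / a (m + k) := tl_le ha hc hc0 (m + k)
        have h3 : (a m : ℝ) * 2^k ≤ a (m + k) := by exact_mod_cast a_growth ha m k
        have h4 : (0:ℝ) < 2^k := by positivity
        have h5 : (1/2 : ℝ)^k = ((2:ℝ)^k)⁻¹ := by
          rw [one_div, inv_pow]
        have h2 : (a m : ℝ) * (1 / a (m + k)) ≤ (1/2 : ℝ)^k := by
          rw [mul_one_div, div_le_iff₀ (a_real_pos ha (m + k)), h5]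
          rw [inv_mul_eq_div, le_div_iff₀ h4]
          linarith
        calc (a m : ℝ) * tl a c (m + k) ≤ (a m : ℝ) * (1 / a (m + k)) :=
              mul_le_mul_of_nonneg_left h1 (a_real_pos ha m).le
          _ ≤ (1/2 : ℝ)^k := h2
      have habs : |(a m : ℝ) * tl a c m| = (a m : ℝ) * tl a c m :=
        abs_of_nonneg (mul_nonneg (a_real_pos ha m).le htl0)
      linarith [hm, hnorm, hb1, hk, habs]
    refine Zd_of_le hf hg (k : ℝ) ((k : ℝ) * f k) (by positivity) ?_ hB
    intro n
    have h1 : cnt {n : ℕ | ε ≤ ‖((a n : ℤ)) • x‖} n ≤ k * (cnt B n + k) :=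
      cnt_le_sum k key n
    have h1' : ((cnt {n : ℕ | ε ≤ ‖((a n : ℤ)) • x‖} n : ℕ) : ℝ)
        ≤ (k : ℝ) * ((cnt B n : ℝ) + (k : ℝ)) := by
      push_cast
      exact_mod_cast h1
    have h2 : f (cnt {n : ℕ | ε ≤ ‖((a n : ℤ)) • x‖} n)
        ≤ f ((k : ℝ) * ((cnt B n : ℝ) + (k : ℝ))) :=
      f_mono hf (Nat.cast_nonneg _) h1'
    have h3 : f ((k : ℝ) * ((cnt B n : ℝ) + (k : ℝ)))
        ≤ (k : ℝ) * f ((cnt B n : ℝ) + (k : ℝ)) :=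
      f_mul_nat hf k (by positivity)
    have h4 : f ((cnt B n : ℝ) + (k : ℝ)) ≤ f (cnt B n) + f k :=
      f_subadd hf (Nat.cast_nonneg _) (Nat.cast_nonneg _)
    have hk0 : (0:ℝ) ≤ (k : ℝ) := Nat.cast_nonneg _
    nlinarith [h2, h3, h4, hk0]
  · intro hB
    classical
    set c : ℕ → ℕ := fun m => if pick B m = true then a m / a (m - 1) / 2 else 0
      with hcdef
    have hq2 : ∀ m, 1 ≤ m → 2 ≤ a m / a (m - 1) := fun m hm => q_ge_two ha hm
    have hc0 : c 0 = 0 := by simp [hcdef, pick_zero]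
    have hc : ∀ n, 1 ≤ n → c n ≤ a n / a (n - 1) - 1 := by
      intro n hn
      by_cases hp : pick B n = true
      · have := hq2 n hn
        simp only [hcdef, hp, if_true]
        omega
      · simp [hcdef, hp]
    refine ⟨((∑' n, (c n : ℝ) / (a n : ℝ) : ℝ) : AddCircle (1 : ℝ)), c,
      ⟨hc0, hc, ?_, rfl⟩, ?_, ?_⟩
    · intro N
      by_cases hp : pick B (max N 1) = true
      · refine ⟨max N 1 + 1, by omega, ?_⟩
        have hpf : pick B (max N 1 + 1) = false := pick_succ_false hp
        have hq := hq2 (max N 1 + 1) (by omega)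
        simp only [hcdef, hpf]
        simp only [Bool.false_eq_true, if_false]
        omega
      · refine ⟨max N 1, le_max_left N 1, ?_⟩
        have hq := hq2 (max N 1) (le_max_right N 1)
        simp only [hcdef, hp]
        simp only [Bool.false_eq_true, if_false]
        omega
    · intro m hm
      simp only [Set.mem_setOf_eq, hcdef] at hm
      by_cases hp : pick B m = true
      · exact pick_mem hp
      · simp [hp] at hm
    · intro hmem
      simp only [statChar, Set.mem_setOf_eq] at hmem
      have hbad := hmem (1/4 : ℝ) (by norm_num)
      have hsub : {m : ℕ | pick B (m + 1) = true} ⊆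
          {n : ℕ | (1/4 : ℝ) ≤ ‖((a n : ℤ)) •
            (((∑' n, (c n : ℝ) / (a n : ℝ) : ℝ)) : AddCircle (1 : ℝ))‖} := by
        intro n hn
        simp only [Set.mem_setOf_eq] at hn ⊢
        have hsm := smul_eq ha hc hc0 n
        rw [hsm]
        -- bounds on t = a n * tl a c n
        have hqm : a (n + 1) / a n * a n = a (n + 1) := by
          have := q_mul ha (n := n + 1) (by omega)
          simpa using this
        have hq2' : 2 ≤ a (n + 1) / a n := by
          have := hq2 (n + 1) (by omega)
          simpa using this
        have hcn1 : c (n + 1) = a (n + 1) / a n / 2 := by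
          simp [hcdef, hn]
        have hcn2 : c (n + 2) = 0 := by
          have hpf : pick B (n + 2) = false := pick_succ_false hn
          simp [hcdef, hpf]
        have htl1 : tl a c n = (c (n + 1) : ℝ) / a (n + 1) + tl a c (n + 1) :=
          tl_rec ha hc hc0 n
        have htl2 : tl a c (n + 1) = tl a c (n + 2) := by
          have h := tl_rec ha hc hc0 (n + 1)
          rw [hcn2] at h
          simpa using h
        have hT : tl a c (n + 2) ≤ 1 / a (n + 2) := tl_le ha hc hc0 (n + 2)
        have hT0 : 0 ≤ tl a c (n + 2) := tl_nonneg ha hc hc0 (n + 2)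
        set q : ℕ := a (n + 1) / a n with hqdef
        have hq0 : (0:ℝ) < (q : ℝ) := by
          have : 0 < q := by omega
          exact_mod_cast this
        have han : (0:ℝ) < (a n : ℝ) := a_real_pos ha n
        have han1 : (0:ℝ) < (a (n + 1) : ℝ) := a_real_pos ha (n + 1)
        have han2 : (0:ℝ) < (a (n + 2) : ℝ) := a_real_pos ha (n + 2)
        have hqmr : (q : ℝ) * (a n : ℝ) = (a (n + 1) : ℝ) := by exact_mod_cast hqm
        have hmain : (a n : ℝ) * ((c (n + 1) : ℝ) / a (n + 1))
            = ((q / 2 : ℕ) : ℝ) / (q : ℝ) := by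
          rw [hcn1, ← hqmr]
          field_simp
        have hlow : (1/3 : ℝ) ≤ ((q / 2 : ℕ) : ℝ) / (q : ℝ) := by
          rw [div_le_div_iff₀ (by norm_num) hq0]
          have hnat : q ≤ 3 * (q / 2) := by omega
          have : (q : ℝ) ≤ 3 * ((q / 2 : ℕ) : ℝ) := by exact_mod_cast hnat
          linarith
        have hhigh : ((q / 2 : ℕ) : ℝ) / (q : ℝ) ≤ 1/2 := by
          rw [div_le_div_iff₀ hq0 (by norm_num)]
          have hnat : 2 * (q / 2) ≤ q := by omega
          have : 2 * ((q / 2 : ℕ) : ℝ) ≤ (q : ℝ) := by exact_mod_cast hnat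
          linarith
        have htail : (a n : ℝ) * tl a c (n + 1) ≤ 1/4 := by
          rw [htl2]
          have h4a : 4 * a n ≤ a (n + 2) := by
            have h1 := ha.2.2.2 n
            have h2 : 2 * a (n + 1) ≤ a (n + 2) := ha.2.2.2 (n + 1)
            omega
          have h4a' : 4 * (a n : ℝ) ≤ (a (n + 2) : ℝ) := by exact_mod_cast h4a
          calc (a n : ℝ) * tl a c (n + 2) ≤ (a n : ℝ) * (1 / a (n + 2)) :=
                mul_le_mul_of_nonneg_left hT han.le
            _ = (a n : ℝ) / a (n + 2) := by rw [mul_one_div]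
            _ ≤ 1/4 := by
                rw [div_le_div_iff₀ han2 (by norm_num)]
                linarith
        have htail0 : 0 ≤ (a n : ℝ) * tl a c (n + 1) := by
          rw [htl2]
          exact mul_nonneg han.le hT0
        apply norm_coe_ge
        · rw [htl1, mul_add, hmain]
          linarith
        · rw [htl1, mul_add, hmain]
          linarith
      exact hB (Zd_of_le hf hg 2 (f 2) (by norm_num) (fun n => by
        have h1 := cnt_le_two_mul_pick B n
        have h2 := pick_le_cnt_shift B n
        have h3 : cnt B n ≤ 2 * cnt {m | pick B (m + 1) = true} n + 2 := by omega
        have h3' : ((cnt B n : ℕ) : ℝ)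
            ≤ 2 * ((cnt {m | pick B (m + 1) = true} n : ℕ) : ℝ) + 2 := by
          exact_mod_cast h3
        have h4 : f (cnt B n) ≤ f (2 * ((cnt {m | pick B (m + 1) = true} n : ℕ) : ℝ) + 2) :=
          f_mono hf (Nat.cast_nonneg _) h3'
        have h5 : f (2 * ((cnt {m | pick B (m + 1) = true} n : ℕ) : ℝ) + 2)
            ≤ f (2 * ((cnt {m | pick B (m + 1) = true} n : ℕ) : ℝ)) + f 2 :=
          f_subadd hf (by positivity) (by norm_num)
        have h6 : f (2 * ((cnt {m | pick B (m + 1) = true} n : ℕ) : ℝ))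
            ≤ 2 * f ((cnt {m | pick B (m + 1) = true} n : ℕ) : ℝ) := by
          have := f_mul_nat hf 2 (x := ((cnt {m | pick B (m + 1) = true} n : ℕ) : ℝ))
            (Nat.cast_nonneg _)
          push_cast at this
          linarith
        linarith) (Zd_mono hf hg hsub hbad))
end

section
/- Take f(x) = log(1+x). For any weight function g and any 0 < β < α < 1, if A ⊆ ℕ satisfies |A ∩ [1,n]| = ⌊n^β⌋ for all n, then d_α(A) = lim_n |A∩[1,n]|/n^α = 0, while the upper f-density of weight g of A is positive. Consequently t^{f,g}_{(a_n)}(𝕋) ≠ t^{α}_{(a_n)}(𝕋) for any arithmetic sequence (a_n). -/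
open Filter Set

namespace Stmt18aux


lemma cnt_mono {A B : Set ℕ} (h : A ⊆ B) (n : ℕ) : cnt A n ≤ cnt B n := by
  classical
  apply Finset.card_le_card
  intro m hm
  simp only [Finset.mem_filter] at hm ⊢
  exact ⟨hm.1, h hm.2⟩

lemma tendsto_rpow_div_rpow {γ α : ℝ} (hγ : 0 ≤ γ) (hγα : γ < α) (C : ℝ) :
    Tendsto (fun n : ℕ => C * (n : ℝ) ^ γ / (n : ℝ) ^ α) atTop (nhds 0) := by
  have h1 : Tendsto (fun n : ℕ => (n : ℝ) ^ (-(α - γ))) atTop (nhds 0) :=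
    (tendsto_rpow_neg_atTop (by linarith)).comp tendsto_natCast_atTop_atTop
  have h2 : Tendsto (fun n : ℕ => C * (n : ℝ) ^ (-(α - γ))) atTop (nhds 0) := by
    simpa using h1.const_mul C
  apply h2.congr'
  filter_upwards [eventually_ge_atTop 1] with n hn
  have hn0 : (0 : ℝ) < n := by exact_mod_cast hn
  rw [mul_div_assoc, neg_sub, Real.rpow_sub hn0]

lemma part1 {α γ : ℝ} (hγ : 0 ≤ γ) (hγα : γ < α) (C : ℝ) (u : ℕ → ℕ)
    (hu : ∀ᶠ n : ℕ in atTop, (u n : ℝ) ≤ C * (n : ℝ) ^ γ) :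
    Tendsto (fun n : ℕ => (u n : ℝ) / (n : ℝ) ^ α) atTop (nhds 0) := by
  apply squeeze_zero' (g := fun n : ℕ => C * (n : ℝ) ^ γ / (n : ℝ) ^ α)
  · filter_upwards with n
    positivity
  · filter_upwards [hu, eventually_ge_atTop 1] with n hn hn1
    have hn0 : (0 : ℝ) < n := by exact_mod_cast hn1
    exact div_le_div_of_nonneg_right hn (by positivity) |>.trans_eq rfl
  · exact tendsto_rpow_div_rpow hγ hγα C

lemma weight_freq {g : ℕ → ℝ} (hg : IsWeight g) :
    ∃ δ : ℝ, 0 < δ ∧ ∃ᶠ n : ℕ in atTop, g n ≤ (n : ℝ) / δ := by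
  obtain ⟨h0, htop, hnot⟩ := hg
  rw [Metric.tendsto_nhds] at hnot
  push_neg at hnot
  obtain ⟨δ, hδ, hfr⟩ := hnot
  refine ⟨δ, hδ, ?_⟩
  have h1 : ∀ᶠ n : ℕ in atTop, 1 ≤ g n := htop.eventually_ge_atTop 1
  have := hfr.and_eventually h1
  apply this.mono
  rintro n ⟨hn1, hn2⟩
  have hgpos : 0 < g n := lt_of_lt_of_le one_pos hn2
  rw [Real.dist_eq, sub_zero, abs_of_nonneg (by positivity)] at hn1
  rw [le_div_iff₀ hgpos] at hn1
  rw [le_div_iff₀ hδ]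
  linarith


lemma not_in_Zd {g : ℕ → ℝ} (hg : IsWeight g) (B : Set ℕ) {γ : ℝ} (hγ : 0 < γ)
    (hB : ∀ᶠ n : ℕ in atTop, (n : ℝ) ^ γ ≤ 1 + (cnt B n : ℝ)) :
    B ∉ Zd (fun x => Real.log (1 + x)) g := by
  intro hmem
  obtain ⟨δ, hδ, hfreq⟩ := weight_freq hg
  have h1 : ∀ᶠ n : ℕ in atTop, 1 ≤ g n := hg.2.1.eventually_ge_atTop 1
  have h2 : ∀ᶠ n : ℕ in atTop, 1 + 1/δ ≤ (n : ℝ) :=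
    tendsto_natCast_atTop_atTop.eventually_ge_atTop (1 + 1/δ)
  have h3 : ∀ᶠ n : ℕ in atTop,
      Real.log (1 + (cnt B n : ℝ)) / Real.log (1 + g n) < γ / 2 := by
    simp only [Zd, Set.mem_setOf_eq] at hmem
    exact hmem.eventually (gt_mem_nhds (by positivity : (0:ℝ) < γ/2))
  have h4 : ∀ᶠ n : ℕ in atTop, 2 ≤ n := eventually_ge_atTop 2
  have := hfreq.and_eventually (hB.and (h1.and (h2.and (h3.and h4))))
  obtain ⟨n, hfr, hBn, hg1, hn1, hlt, hn2⟩ := this.exists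
  -- basic positivity
  have hn0 : (2 : ℝ) ≤ (n : ℝ) := by exact_mod_cast hn2
  have hnpos : (0 : ℝ) < n := by linarith
  have hlogn : 0 < Real.log n := Real.log_pos (by linarith)
  -- numerator lower bound
  have hnum : γ * Real.log n ≤ Real.log (1 + (cnt B n : ℝ)) := by
    have : Real.log ((n : ℝ) ^ γ) ≤ Real.log (1 + (cnt B n : ℝ)) :=
      Real.log_le_log (by positivity) hBn
    rwa [Real.log_rpow hnpos] at this
  -- denominator upper bound
  have hden : Real.log (1 + g n) ≤ 2 * Real.log n := by
    have hle : 1 + g n ≤ (n : ℝ) ^ 2 := by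
      have : (n:ℝ) * (1 + 1/δ) ≤ (n:ℝ) * (n:ℝ) := by
        apply mul_le_mul_of_nonneg_left hn1 (le_of_lt hnpos)
      have h5 : 1 + g n ≤ 1 + (n:ℝ)/δ := by linarith
      have h6 : (n:ℝ) * (1 + 1/δ) = (n:ℝ) + (n:ℝ)/δ := by ring
      nlinarith
    calc Real.log (1 + g n) ≤ Real.log ((n:ℝ)^2) := Real.log_le_log (by linarith) hle
    _ = 2 * Real.log n := by rw [Real.log_pow]; push_cast; ring
  have hdenpos : 0 < Real.log (1 + g n) := Real.log_pos (by linarith)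
  have key : γ / 2 ≤ Real.log (1 + (cnt B n : ℝ)) / Real.log (1 + g n) := by
    have : γ * Real.log n / (2 * Real.log n) ≤
        Real.log (1 + (cnt B n : ℝ)) / Real.log (1 + g n) :=
      div_le_div₀ (Real.log_nonneg (le_add_of_nonneg_right (Nat.cast_nonneg _))) hnum hdenpos hden
    calc γ / 2 = γ * Real.log n / (2 * Real.log n) := by
          field_simp
    _ ≤ _ := this
  linarith



def Sset (t : ℕ) : Set ℕ := {m | ∃ k, 1 ≤ k ∧ k ^ t = m}

open scoped Classical in
noncomputable def cseq (a : ℕ → ℕ) (t : ℕ) (n : ℕ) : ℕ :=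
  if n ∈ Sset t then a n / a (n - 1) / 2 else 0

lemma a_pos {a : ℕ → ℕ} (ha : IsArith a) (n : ℕ) : 0 < a n := by
  have := ha.2.1.monotone (Nat.zero_le n)
  rw [ha.1] at this
  omega

lemma a_pos' {a : ℕ → ℕ} (ha : IsArith a) (n : ℕ) : 1 ≤ a n := by
  have := ha.2.1.monotone (Nat.zero_le n)
  rw [ha.1] at this
  exact this

lemma a_dvd {a : ℕ → ℕ} (ha : IsArith a) : ∀ {n m : ℕ}, n ≤ m → a n ∣ a m := by
  intro n m h
  induction m with
  | zero => exact Nat.le_zero.mp h ▸ dvd_refl _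
  | succ m ih =>
    rcases Nat.lt_or_ge n (m + 1) with h1 | h1
    · exact (ih (by omega)).trans (ha.2.2.1 m)
    · have : n = m + 1 := by omega
      exact this ▸ dvd_refl _

lemma a_growth {a : ℕ → ℕ} (ha : IsArith a) (m k : ℕ) : 2 ^ k * a m ≤ a (m + k) := by
  induction k with
  | zero => simp
  | succ k ih =>
    have h := ha.2.2.2 (m + k)
    have h2 : 2 ^ (k+1) * a m = 2 * (2 ^ k * a m) := by ring
    have e : m + (k+1) = (m + k) + 1 := by omega
    rw [e]
    omega

lemma zero_not_mem {t : ℕ} (ht : 1 ≤ t) : 0 ∉ Sset t := by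
  rintro ⟨k, hk1, hkm⟩
  have : k ^ t ≥ 1 := Nat.one_le_pow _ _ (by omega)
  omega

lemma pow_gap {t k : ℕ} (ht : 2 ≤ t) (hk : 1 ≤ k) : k ^ t + 2 ≤ (k + 1) ^ t := by
  have h1 : (k+1)^t = (k+1)^2 * (k+1)^(t-2) := by rw [← pow_add]; congr 1; omega
  have h2 : k^t = k^2 * k^(t-2) := by rw [← pow_add]; congr 1; omega
  have h3 : k^(t-2) ≤ (k+1)^(t-2) := Nat.pow_le_pow_left (by omega) _
  have h4 : 1 ≤ k^(t-2) := Nat.one_le_pow _ _ (by omega)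
  nlinarith

lemma succ_not_mem {t m : ℕ} (ht : 2 ≤ t) (h : m + 1 ∈ Sset t) : m + 2 ∉ Sset t := by
  obtain ⟨k, hk1, hkm⟩ := h
  rintro ⟨k', hk'1, hk'm⟩
  have hlt : k < k' := by
    by_contra hle
    push_neg at hle
    have := Nat.pow_le_pow_left hle t
    omega
  have h1 := pow_gap ht hk1
  have h2 : (k+1)^t ≤ k'^t := Nat.pow_le_pow_left (by omega) t
  omega

lemma mem_ge_one {t m : ℕ} (ht : 1 ≤ t) (h : m ∈ Sset t) : 1 ≤ m := by
  obtain ⟨k, hk1, hkm⟩ := h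
  have : 1 ≤ k ^ t := Nat.one_le_pow _ _ (by omega)
  omega

lemma cseq_le {a : ℕ → ℕ} (ha : IsArith a) (t n : ℕ) (hn : 1 ≤ n) :
    2 * cseq a t n * a (n - 1) ≤ a n := by
  unfold cseq
  split
  · have hd : a (n-1) ∣ a n := a_dvd ha (by omega)
    set q := a n / a (n - 1) with hq
    have hqa : q * a (n-1) = a n := Nat.div_mul_cancel hd
    have : 2 * (q / 2) ≤ q := by omega
    calc 2 * (q / 2) * a (n-1) ≤ q * a (n-1) :=
      Nat.mul_le_mul_right _ this
    _ = a n := hqa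
  · simp

lemma cseq_ge {a : ℕ → ℕ} (ha : IsArith a) (t n : ℕ) (ht : 1 ≤ t) (hS : n ∈ Sset t) :
    a n ≤ 3 * cseq a t n * a (n - 1) := by
  have hn : 1 ≤ n := mem_ge_one ht hS
  unfold cseq
  rw [if_pos hS]
  have hd : a (n-1) ∣ a n := a_dvd ha (by omega)
  set q := a n / a (n - 1) with hq
  have hqa : q * a (n-1) = a n := Nat.div_mul_cancel hd
  have h2 : 2 * a (n-1) ≤ a n := by
    have hsucc := ha.2.2.2 (n-1)
    have he : n - 1 + 1 = n := by omega
    rw [he] at hsucc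
    exact hsucc
  have hq2 : 2 ≤ q := by
    have hp := a_pos ha (n-1)
    have hmul : 2 * a (n-1) ≤ q * a (n-1) := by omega
    exact Nat.le_of_mul_le_mul_right (by omega) hp
  have h3 : q ≤ 3 * (q / 2) := by omega
  calc a n = q * a (n-1) := hqa.symm
  _ ≤ (3 * (q/2)) * a (n-1) := Nat.mul_le_mul_right _ h3
  _ = 3 * (q/2) * a (n-1) := by ring

lemma cseq_eq_zero {a : ℕ → ℕ} {t n : ℕ} (h : n ∉ Sset t) : cseq a t n = 0 := by
  unfold cseq; rw [if_neg h]

lemma cnt_S_le (t : ℕ) (ht : 1 ≤ t) (N : ℕ) :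
    cnt (Sset t) N ≤ ⌊(N : ℝ) ^ ((t : ℝ)⁻¹)⌋₊ := by
  classical
  set R := ⌊(N : ℝ) ^ ((t : ℝ)⁻¹)⌋₊ with hR
  have hsub : (Finset.Icc 1 N).filter (fun m => m ∈ Sset t) ⊆
      (Finset.Icc 1 R).image (fun k => k ^ t) := by
    intro m hm
    simp only [Finset.mem_filter, Finset.mem_Icc] at hm
    obtain ⟨⟨hm1, hmN⟩, k, hk1, hkm⟩ := hm
    simp only [Finset.mem_image, Finset.mem_Icc]
    refine ⟨k, ⟨hk1, ?_⟩, hkm⟩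
    apply Nat.le_floor
    have h1 : ((k ^ t : ℕ) : ℝ) ≤ (N : ℝ) := by exact_mod_cast hkm ▸ hmN
    have h2 : ((k ^ t : ℕ) : ℝ) ^ ((t:ℝ)⁻¹) ≤ (N : ℝ) ^ ((t:ℝ)⁻¹) :=
      Real.rpow_le_rpow (by positivity) h1 (by positivity)
    calc (k:ℝ) = (((k ^ t : ℕ) : ℝ)) ^ ((t:ℝ)⁻¹) := by
          push_cast
          rw [← Real.rpow_natCast (k:ℝ) t, ← Real.rpow_mul (by positivity),
            mul_inv_cancel₀ (Nat.cast_ne_zero.mpr (by omega)), Real.rpow_one]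
    _ ≤ _ := h2
  calc cnt (Sset t) N ≤ ((Finset.Icc 1 R).image (fun k => k ^ t)).card :=
        Finset.card_le_card hsub
  _ ≤ (Finset.Icc 1 R).card := Finset.card_image_le
  _ = R := by simp

lemma cnt_D_le (t K n : ℕ) :
    cnt {m | ∃ s, s ∈ Sset t ∧ m < s ∧ s ≤ m + K} n ≤ K * cnt (Sset t) (n + K) := by
  classical
  rw [mul_comm]
  calc cnt {m | ∃ s, s ∈ Sset t ∧ m < s ∧ s ≤ m + K} n
      ≤ (((Finset.Icc 1 (n+K)).filter (fun s => s ∈ Sset t)).biUnion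
        (fun s => Finset.Icc (s - K) (s - 1))).card := by
        apply Finset.card_le_card
        intro m hm
        simp only [Finset.mem_filter, Finset.mem_Icc, Set.mem_setOf_eq] at hm
        obtain ⟨⟨hm1, hmn⟩, s, hsS, hms, hsK⟩ := hm
        simp only [Finset.mem_biUnion, Finset.mem_filter, Finset.mem_Icc]
        exact ⟨s, ⟨⟨by omega, by omega⟩, hsS⟩, by omega, by omega⟩
  _ ≤ (((Finset.Icc 1 (n+K)).filter (fun s => s ∈ Sset t))).card * K :=
        Finset.card_biUnion_le_card_mul _ _ _ (fun s hs => by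
          simp only [Finset.mem_filter, Finset.mem_Icc] at hs
          rw [Nat.card_Icc]
          omega)
  _ = cnt (Sset t) (n+K) * K := rfl

lemma cnt_E_ge (t : ℕ) (ht : 1 ≤ t) (n : ℕ) :
    ⌊((n : ℝ) + 1) ^ ((t : ℝ)⁻¹)⌋₊ ≤ 1 + cnt {m | m + 1 ∈ Sset t} n := by
  classical
  set R := ⌊((n:ℝ)+1) ^ ((t:ℝ)⁻¹)⌋₊ with hR
  have hRt : R ^ t ≤ n + 1 := by
    have h1 : (R : ℝ) ≤ ((n:ℝ)+1) ^ ((t:ℝ)⁻¹) := Nat.floor_le (by positivity)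
    have h2 : ((R:ℝ)) ^ (t:ℕ) ≤ (((n:ℝ)+1) ^ ((t:ℝ)⁻¹)) ^ (t:ℕ) :=
      pow_le_pow_left₀ (Nat.cast_nonneg R) h1 t
    have h3 : (((n:ℝ)+1) ^ ((t:ℝ)⁻¹)) ^ (t:ℕ) = (n:ℝ)+1 := by
      rw [← Real.rpow_natCast (((n:ℝ)+1) ^ ((t:ℝ)⁻¹)) t, ← Real.rpow_mul (by positivity),
        inv_mul_cancel₀ (Nat.cast_ne_zero.mpr (by omega)), Real.rpow_one]
    rw [h3] at h2
    exact_mod_cast h2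
  have hsub : (Finset.Icc 2 R).image (fun k => k ^ t - 1) ⊆
      (Finset.Icc 1 n).filter (fun m => m ∈ {m | m + 1 ∈ Sset t}) := by
    intro m hm
    simp only [Finset.mem_image, Finset.mem_Icc] at hm
    obtain ⟨k, ⟨hk2, hkR⟩, hkm⟩ := hm
    have hkm' : k ^ t - 1 = m := hkm
    have hk1 : 2 ≤ k ^ t := le_trans hk2 (Nat.le_self_pow (by omega) k)
    have hkn : k ^ t ≤ R ^ t := Nat.pow_le_pow_left hkR t
    simp only [Finset.mem_filter, Finset.mem_Icc, Set.mem_setOf_eq]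
    refine ⟨⟨by omega, by omega⟩, ⟨k, by omega, by omega⟩⟩
  have hinj : Set.InjOn (fun k => k ^ t - 1) (Finset.Icc 2 R) := by
    intro k1 h1 k2 h2 he
    simp only [Finset.coe_Icc, Set.mem_Icc] at h1 h2
    have e1 : 2 ≤ k1 ^ t := le_trans h1.1 (Nat.le_self_pow (by omega) k1)
    have e2 : 2 ≤ k2 ^ t := le_trans h2.1 (Nat.le_self_pow (by omega) k2)
    simp only at he
    have h12 : k1 ^ t = k2 ^ t := by omega
    exact Nat.pow_left_injective (by omega) h12
  have hcard := Finset.card_le_card hsub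
  rw [Finset.card_image_of_injOn hinj, Nat.card_Icc] at hcard
  have : cnt {m | m + 1 ∈ Sset t} n =
      ((Finset.Icc 1 n).filter (fun m => m ∈ {m | m + 1 ∈ Sset t})).card := rfl
  omega


noncomputable def fterm (a : ℕ → ℕ) (t : ℕ) (m n : ℕ) : ℝ :=
  (a m : ℝ) * ((cseq a t n : ℝ) / (a n : ℝ))

noncomputable def xreal (a : ℕ → ℕ) (t : ℕ) : ℝ :=
  ∑' n, (cseq a t n : ℝ) / (a n : ℝ)

noncomputable def Ttail (a : ℕ → ℕ) (t : ℕ) (m : ℕ) : ℝ :=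
  ∑' i, fterm a t m (i + (m + 1))

lemma fterm_nonneg (a : ℕ → ℕ) (t m n : ℕ) : 0 ≤ fterm a t m n := by
  unfold fterm; positivity

lemma hdiv {a : ℕ → ℕ} (ha : IsArith a) (t : ℕ) {n : ℕ} (hn : 1 ≤ n) :
    (cseq a t n : ℝ) / (a n : ℝ) ≤ 1 / (2 * (a (n - 1) : ℝ)) := by
  have h1 := cseq_le ha t n hn
  have p1 : (0:ℝ) < (a n : ℝ) := by exact_mod_cast a_pos ha n
  have p2 : (0:ℝ) < (a (n-1) : ℝ) := by exact_mod_cast a_pos ha (n-1)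
  rw [div_le_div_iff₀ p1 (by positivity)]
  have h1' : ((2 * cseq a t n * a (n-1) : ℕ) : ℝ) ≤ (a n : ℝ) := by exact_mod_cast h1
  push_cast at h1'
  nlinarith

lemma apow_le {a : ℕ → ℕ} (ha : IsArith a) (m k : ℕ) : (2:ℝ)^k * (a m : ℝ) ≤ (a (m + k) : ℝ) := by
  have := a_growth ha m k
  exact_mod_cast this

lemma a_ge_pow {a : ℕ → ℕ} (ha : IsArith a) (n : ℕ) : (2:ℝ)^n ≤ (a n : ℝ) := by
  have h := apow_le ha 0 n
  rw [ha.1] at h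
  simpa using h

lemma fterm_le {a : ℕ → ℕ} (ha : IsArith a) {t : ℕ} (ht : 1 ≤ t) (m n : ℕ) :
    fterm a t m n ≤ (a m : ℝ) * (1/2)^n := by
  rcases Nat.eq_zero_or_pos n with h0 | h0
  · subst h0
    have : cseq a t 0 = 0 := cseq_eq_zero (zero_not_mem ht)
    simp [fterm, this]
  · unfold fterm
    have h1 := hdiv ha t h0
    have h2 : (2:ℝ)^(n-1) ≤ (a (n-1) : ℝ) := a_ge_pow ha (n-1)
    have p2 : (0:ℝ) < (a (n-1) : ℝ) := by exact_mod_cast a_pos ha (n-1)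
    have h3 : (1:ℝ) / (2 * (a (n-1):ℝ)) ≤ (1/2)^n := by
      have h2n : (2:ℝ)^n = 2 * 2^(n-1) := by
        rw [← pow_succ']
        congr 1
        omega
      have h5 : (2:ℝ)^n ≤ 2 * (a (n-1):ℝ) := by
        rw [h2n]; linarith
      calc (1:ℝ) / (2 * (a (n-1):ℝ)) ≤ 1 / (2:ℝ)^n :=
            one_div_le_one_div_of_le (by positivity) h5
      _ = (1/2)^n := by rw [one_div_pow]
    calc (a m : ℝ) * ((cseq a t n : ℝ) / (a n : ℝ)) ≤ (a m : ℝ) * (1 / (2 * (a (n-1):ℝ))) := by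
          apply mul_le_mul_of_nonneg_left h1 (by positivity)
    _ ≤ (a m : ℝ) * (1/2)^n := by
          apply mul_le_mul_of_nonneg_left h3 (by positivity)

lemma summable_fterm {a : ℕ → ℕ} (ha : IsArith a) {t : ℕ} (ht : 1 ≤ t) (m : ℕ) :
    Summable (fterm a t m) := by
  apply Summable.of_nonneg_of_le (fterm_nonneg a t m) (fterm_le ha ht m)
  exact (summable_geometric_of_lt_one (by norm_num) (by norm_num)).mul_left _

lemma summable_fterm_shift {a : ℕ → ℕ} (ha : IsArith a) {t : ℕ} (ht : 1 ≤ t) (m k : ℕ) :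
    Summable (fun i => fterm a t m (i + k)) :=
  (summable_nat_add_iff k).2 (summable_fterm ha ht m)

lemma Ttail_nonneg {a : ℕ → ℕ} (t m : ℕ) : 0 ≤ Ttail a t m :=
  tsum_nonneg (fun i => fterm_nonneg a t m _)

lemma decomp {a : ℕ → ℕ} (ha : IsArith a) {t : ℕ} (ht : 1 ≤ t) (m : ℕ) :
    ∃ J : ℕ, (a m : ℝ) * xreal a t = (J : ℝ) + Ttail a t m := by
  refine ⟨∑ n ∈ Finset.range (m+1), (a m / a n) * cseq a t n, ?_⟩
  have h1 : (a m : ℝ) * xreal a t = ∑' n, fterm a t m n := by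
    rw [xreal, ← tsum_mul_left]
    simp only [fterm]
  have h2 := Summable.sum_add_tsum_nat_add (f := fterm a t m) (m+1) (summable_fterm ha ht m)
  have h3 : ((∑ n ∈ Finset.range (m+1), (a m / a n) * cseq a t n : ℕ) : ℝ) =
      ∑ n ∈ Finset.range (m+1), fterm a t m n := by
    push_cast
    apply Finset.sum_congr rfl
    intro n hn
    simp only [Finset.mem_range] at hn
    have hd : a n ∣ a m := a_dvd ha (by omega)
    have hz : (a n : ℝ) ≠ 0 := by
      have := a_pos ha n; positivity
    rw [Nat.cast_div hd hz, fterm]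
    ring
  rw [h1, ← h2, h3, Ttail]

lemma tail_le' {a : ℕ → ℕ} (ha : IsArith a) {t : ℕ} (ht : 1 ≤ t) (m M N : ℕ)
    (hmM : m ≤ M) (hMN : M < N)
    (hc0 : ∀ n, M < n → n < N → cseq a t n = 0) :
    ∑' i, fterm a t m (i + (M + 1)) ≤ (a m : ℝ) / (a (N - 1) : ℝ) := by
  have hsum := summable_fterm_shift ha ht m (M+1)
  set k := N - 1 - M with hk
  have hsplit := Summable.sum_add_tsum_nat_add (f := fun i => fterm a t m (i + (M+1))) k hsum
  have hzero : ∑ i ∈ Finset.range k, fterm a t m (i + (M+1)) = 0 := by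
    apply Finset.sum_eq_zero
    intro i hi
    simp only [Finset.mem_range] at hi
    have : cseq a t (i + (M+1)) = 0 := hc0 _ (by omega) (by omega)
    simp [fterm, this]
  have hcongr : (fun i => fterm a t m (i + k + (M+1))) = (fun i => fterm a t m (i + N)) := by
    funext i
    congr 1
    omega
  -- the remaining tail
  have hbound : ∑' i, fterm a t m (i + N) ≤
      ∑' i, ((a m : ℝ) / (a (N-1) : ℝ)) * ((1/2) * (1/2)^i) := by
    refine Summable.tsum_le_tsum (fun i => ?_) (summable_fterm_shift ha ht m N)
      ((((summable_geometric_of_lt_one (by norm_num) (by norm_num)).mul_left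
        ((1:ℝ)/2))).mul_left _)
    · have h1 : fterm a t m (i + N) ≤ (a m : ℝ) * (1 / (2 * (a (i + N - 1) : ℝ))) := by
        unfold fterm
        apply mul_le_mul_of_nonneg_left (hdiv ha t (by omega)) (by positivity)
      have h2 : (2:ℝ)^i * (a (N-1) : ℝ) ≤ (a (i + N - 1) : ℝ) := by
        have := apow_le ha (N-1) i
        have he : N - 1 + i = i + N - 1 := by omega
        rw [he] at this
        linarith [this]
      have p1 : (0:ℝ) < (a (N-1) : ℝ) := by exact_mod_cast a_pos ha (N-1)
      have p2 : (0:ℝ) < (a (i + N - 1) : ℝ) := by exact_mod_cast a_pos ha (i + N - 1)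
      have h3 : (a m : ℝ) * (1 / (2 * (a (i + N - 1) : ℝ))) ≤
          (a m : ℝ) * (1 / (2 * ((2:ℝ)^i * (a (N-1) : ℝ)))) := by
        apply mul_le_mul_of_nonneg_left _ (by positivity)
        apply one_div_le_one_div_of_le (by positivity)
        nlinarith
      have h4 : (a m : ℝ) * (1 / (2 * ((2:ℝ)^i * (a (N-1) : ℝ)))) =
          ((a m : ℝ) / (a (N-1) : ℝ)) * ((1/2) * (1/2)^i) := by
        rw [mul_one_div, ← pow_succ', one_div_pow, div_mul_div_comm, mul_one]
        congr 1
        ring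
      linarith
  have hgeo : ∑' i : ℕ, ((a m : ℝ) / (a (N-1) : ℝ)) * ((1/2) * (1/2)^i) =
      (a m : ℝ) / (a (N-1) : ℝ) := by
    rw [tsum_mul_left, tsum_mul_left, tsum_geometric_of_lt_one (by norm_num) (by norm_num)]
    norm_num
  calc ∑' i, fterm a t m (i + (M+1))
      = ∑ i ∈ Finset.range k, fterm a t m (i + (M+1)) + ∑' i, fterm a t m (i + k + (M+1)) := by
        rw [hsplit]
  _ = ∑' i, fterm a t m (i + N) := by rw [hzero, hcongr]; ring
  _ ≤ _ := hbound.trans hgeo.le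

lemma Ttail_le {a : ℕ → ℕ} (ha : IsArith a) {t : ℕ} (ht : 1 ≤ t) (m N : ℕ)
    (hMN : m < N) (hc0 : ∀ n, m < n → n < N → cseq a t n = 0) :
    Ttail a t m ≤ (a m : ℝ) / (a (N - 1) : ℝ) :=
  tail_le' ha ht m m N le_rfl hMN hc0

lemma Ttail_ge {a : ℕ → ℕ} (ha : IsArith a) {t : ℕ} (ht : 1 ≤ t) (m : ℕ)
    (hS : m + 1 ∈ Sset t) : 1/3 ≤ Ttail a t m := by
  have h0 : fterm a t m (0 + (m+1)) ≤ Ttail a t m := by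
    apply Summable.le_tsum (summable_fterm_shift ha ht m (m+1)) 0
    intro i _
    exact fterm_nonneg a t m _
  have hge := cseq_ge ha t (m+1) ht hS
  simp only [Nat.add_sub_cancel] at hge
  have p0 : (0:ℝ) < (a m : ℝ) := by exact_mod_cast a_pos ha m
  have p1 : (0:ℝ) < (a (m+1) : ℝ) := by exact_mod_cast a_pos ha (m+1)
  have hge' : ((a (m+1) : ℕ) : ℝ) ≤ 3 * (cseq a t (m+1) : ℝ) * (a m : ℝ) := by
    exact_mod_cast hge
  have h1 : (1:ℝ)/3 ≤ fterm a t m (0 + (m+1)) := by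
    simp only [Nat.zero_add]
    unfold fterm
    rw [mul_div_assoc'] -- (a m * c) / a(m+1)
    rw [le_div_iff₀ p1]
    nlinarith
  linarith

lemma Ttail_le34 {a : ℕ → ℕ} (ha : IsArith a) {t : ℕ} (ht : 2 ≤ t) (m : ℕ)
    (hS : m + 1 ∈ Sset t) : Ttail a t m ≤ 3/4 := by
  have ht1 : 1 ≤ t := by omega
  have hsum := summable_fterm_shift ha ht1 m (m+1)
  have hsplit := Summable.tsum_eq_zero_add hsum
  have hcongr : (fun i : ℕ => fterm a t m (i + 1 + (m+1))) = (fun i => fterm a t m (i + (m+2))) := by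
    funext i
    congr 1
    omega
  have htail : ∑' i, fterm a t m (i + (m+2)) ≤ (a m : ℝ) / (a (m+2) : ℝ) := by
    have := tail_le' ha ht1 m (m+1) (m+3) (by omega) (by omega) ?_
    · simpa using this
    · intro n h1 h2
      have : n = m + 2 := by omega
      subst this
      exact cseq_eq_zero (succ_not_mem ht hS)
  have hquarter : (a m : ℝ) / (a (m+2) : ℝ) ≤ 1/4 := by
    have h4 := apow_le ha m 2
    have p2 : (0:ℝ) < (a (m+2) : ℝ) := by exact_mod_cast a_pos ha (m+2)
    rw [div_le_iff₀ p2]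
    norm_num at h4 ⊢
    linarith
  have hhalf : fterm a t m (0 + (m+1)) ≤ 1/2 := by
    simp only [Nat.zero_add]
    unfold fterm
    have h1 := hdiv ha t (show 1 ≤ m+1 by omega)
    simp only [Nat.add_sub_cancel] at h1
    have p0 : (0:ℝ) < (a m : ℝ) := by exact_mod_cast a_pos ha m
    calc (a m : ℝ) * ((cseq a t (m+1) : ℝ) / (a (m+1) : ℝ))
        ≤ (a m : ℝ) * (1 / (2 * (a m : ℝ))) := by
          apply mul_le_mul_of_nonneg_left h1 (by positivity)
    _ = 1/2 := by
          rw [mul_one_div, div_eq_div_iff (by positivity) (by norm_num : (2:ℝ) ≠ 0)]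
          ring
  calc Ttail a t m = fterm a t m (0 + (m+1)) + ∑' i, fterm a t m (i + 1 + (m+1)) := hsplit
  _ ≤ 1/2 + ∑' i, fterm a t m (i + (m+2)) := by rw [hcongr]; linarith
  _ ≤ 1/2 + (a m : ℝ) / (a (m+2) : ℝ) := by linarith
  _ ≤ 3/4 := by linarith


lemma coe_nat_zero (J : ℕ) : ((J : ℝ) : AddCircle (1:ℝ)) = 0 := by
  rw [AddCircle.coe_eq_zero_iff]
  exact ⟨(J : ℤ), by simp⟩

lemma zsmul_coe (z : ℤ) (r : ℝ) :
    z • ((r : ℝ) : AddCircle (1:ℝ)) = (((z : ℝ) * r : ℝ) : AddCircle (1:ℝ)) := by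
  rw [← AddCircle.coe_zsmul, zsmul_eq_mul]

lemma norm_coe_one (r : ℝ) : ‖((r : ℝ) : AddCircle (1:ℝ))‖ = |r - round r| := by
  rw [AddCircle.norm_eq]
  norm_num

lemma norm_coe_le_abs (r : ℝ) : ‖((r : ℝ) : AddCircle (1:ℝ))‖ ≤ |r| := by
  rw [norm_coe_one]
  simpa using round_le r 0

lemma norm_ge_quarter {T : ℝ} (h1 : 1/3 ≤ T) (h2 : T ≤ 3/4) :
    1/4 ≤ ‖((T : ℝ) : AddCircle (1:ℝ))‖ := by
  rw [norm_coe_one]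
  have hz1 : ((round T : ℤ) : ℝ) ≤ T + 1/2 := by
    rw [round_eq]
    exact Int.floor_le _
  have hz2 : T + 1/2 < ((round T : ℤ) : ℝ) + 1 := by
    rw [round_eq]
    exact Int.lt_floor_add_one _
  have hb1 : ((round T : ℤ) : ℝ) < 2 := by linarith
  have hb2 : (-1 : ℝ) < ((round T : ℤ) : ℝ) := by linarith
  have hi1 : round T < 2 := by exact_mod_cast hb1
  have hi2 : -1 < round T := by exact_mod_cast hb2
  have hcase : round T = 0 ∨ round T = 1 := by omega
  rcases hcase with h | h <;> rw [h]
  · push_cast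
    rw [sub_zero, abs_of_nonneg (by linarith)]
    linarith
  · push_cast
    rw [abs_of_nonpos (by linarith)]
    linarith

end Stmt18aux

theorem stmt18 (g : ℕ → ℝ) (hg : IsWeight g) (α β : ℝ)
    (hβ : 0 < β) (hβα : β < α) (hα : α < 1)
    (A : Set ℕ) (hA : ∀ n : ℕ, cnt A n = ⌊(n : ℝ) ^ β⌋₊) :
    Tendsto (fun n : ℕ => (cnt A n : ℝ) / (n : ℝ) ^ α) atTop (nhds 0) ∧
    A ∉ Zd (fun x => Real.log (1 + x)) g ∧
    ∀ a : ℕ → ℕ, IsArith a →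
      statChar (fun x => Real.log (1 + x)) g (fun n => (a n : ℤ)) ≠
        {x : AddCircle (1 : ℝ) | ∀ ε > 0,
          Tendsto (fun n : ℕ =>
            (cnt {m | ε ≤ ‖((a m : ℤ)) • x‖} n : ℝ) / (n : ℝ) ^ α) atTop (nhds 0)} := by
  have hα0 : 0 < α := lt_trans hβ hβα
  refine ⟨?_, ?_, ?_⟩
  · -- Part 1: d_α(A) = 0
    apply Stmt18aux.part1 (le_of_lt hβ) hβα 1
    filter_upwards with n
    rw [hA n, one_mul]
    exact Nat.floor_le (by positivity)
  · -- Part 2: A ∉ Zd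
    apply Stmt18aux.not_in_Zd hg A hβ
    filter_upwards with n
    rw [hA n]
    have h := Nat.lt_floor_add_one ((n : ℝ) ^ β)
    push_cast
    linarith
  · -- Part 3
    intro a ha hEq
    set t : ℕ := max 3 ⌈2/α⌉₊ with htdef
    have ht3 : 3 ≤ t := le_max_left _ _
    have ht1 : 1 ≤ t := by omega
    have ht2 : 2 ≤ t := by omega
    have htR : (0:ℝ) < (t:ℝ) := by
      have h0 : (0:ℕ) < t := by omega
      exact_mod_cast h0
    set γ : ℝ := (t:ℝ)⁻¹ with hγdef
    have hγ0 : 0 < γ := by positivity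
    have htα : γ < α := by
      have h1 : 2/α ≤ ((⌈2/α⌉₊ : ℕ) : ℝ) := Nat.le_ceil _
      have h2 : ((⌈2/α⌉₊ : ℕ) : ℝ) ≤ (t:ℝ) := by exact_mod_cast le_max_right 3 ⌈2/α⌉₊
      have h3 : 2/α ≤ (t:ℝ) := le_trans h1 h2
      have h4 : γ ≤ α/2 := by
        rw [hγdef, inv_eq_one_div, div_le_div_iff₀ htR (by norm_num : (0:ℝ) < 2)]
        rw [div_le_iff₀ hα0] at h3
        nlinarith
      linarith
    set x0 : ℝ := Stmt18aux.xreal a t with hx0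
    set x : AddCircle (1:ℝ) := ((x0 : ℝ) : AddCircle (1:ℝ)) with hxdef
    -- norm formula
    have hnorm : ∀ m : ℕ, ‖((a m : ℤ)) • x‖ =
        |Stmt18aux.Ttail a t m - round (Stmt18aux.Ttail a t m)| := by
      intro m
      obtain ⟨J, hJ⟩ := Stmt18aux.decomp ha ht1 m
      rw [hxdef, Stmt18aux.zsmul_coe]
      push_cast
      rw [hJ, AddCircle.coe_add, Stmt18aux.coe_nat_zero, zero_add, Stmt18aux.norm_coe_one]
    -- norm is at most the tail
    have hnorm_le : ∀ m : ℕ, ‖((a m : ℤ)) • x‖ ≤ Stmt18aux.Ttail a t m := by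
      intro m
      rw [hnorm m]
      calc |Stmt18aux.Ttail a t m - round (Stmt18aux.Ttail a t m)|
          ≤ |Stmt18aux.Ttail a t m| := by simpa using round_le (Stmt18aux.Ttail a t m) 0
      _ = Stmt18aux.Ttail a t m := abs_of_nonneg (Stmt18aux.Ttail_nonneg t m)
    -- x is not in the statChar set
    have hnotmem : x ∉ statChar (fun z => Real.log (1 + z)) g (fun n => ((a n : ℤ))) := by
      intro hmem
      have h14 := hmem (1/4) (by norm_num)
      apply Stmt18aux.not_in_Zd hg {n : ℕ | 1/4 ≤ ‖((a n : ℤ)) • x‖}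
        (show (0:ℝ) < γ/2 by positivity) ?_ h14
      -- eventual lower bound on the counting function
      have hE : {m : ℕ | m + 1 ∈ Stmt18aux.Sset t} ⊆ {n : ℕ | 1/4 ≤ ‖((a n : ℤ)) • x‖} := by
        intro m hm
        have hge := Stmt18aux.Ttail_ge ha ht1 m hm
        have hle := Stmt18aux.Ttail_le34 ha ht2 m hm
        have hq := Stmt18aux.norm_ge_quarter hge hle
        rw [Stmt18aux.norm_coe_one] at hq
        rw [Set.mem_setOf_eq, hnorm m]
        exact hq
      have hev : ∀ᶠ n : ℕ in atTop, (2:ℝ) ≤ (n:ℝ)^(γ/2) :=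
        ((tendsto_rpow_atTop (by positivity : (0:ℝ) < γ/2)).comp
          tendsto_natCast_atTop_atTop).eventually_ge_atTop 2
      filter_upwards [hev, eventually_ge_atTop 1] with n h2 hn1
      have h2' : (2:ℝ) ≤ (n:ℝ)^(γ/2) := h2
      have hnpos : (0:ℝ) < (n:ℝ) := by exact_mod_cast hn1
      have hsq : (n:ℝ)^γ = (n:ℝ)^(γ/2) * (n:ℝ)^(γ/2) := by
        rw [← Real.rpow_add hnpos]
        norm_num
      have hstep : (n:ℝ)^(γ/2) + 1 ≤ (n:ℝ)^γ := by
        rw [hsq]; nlinarith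
      have hmono : (n:ℝ)^γ ≤ ((n:ℝ)+1)^γ :=
        Real.rpow_le_rpow (by positivity) (by linarith) (le_of_lt hγ0)
      have hfl : ((n:ℝ)+1)^γ < (⌊((n:ℝ)+1)^γ⌋₊ : ℝ) + 1 := Nat.lt_floor_add_one _
      have hcnt1 : ⌊((n:ℝ)+1)^((t:ℝ)⁻¹)⌋₊ ≤ 1 + cnt {m | m + 1 ∈ Stmt18aux.Sset t} n :=
        Stmt18aux.cnt_E_ge t ht1 n
      have hcnt2 : cnt {m | m + 1 ∈ Stmt18aux.Sset t} n ≤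
          cnt {n : ℕ | 1/4 ≤ ‖((a n : ℤ)) • x‖} n := Stmt18aux.cnt_mono hE n
      have hcast : (⌊((n:ℝ)+1)^γ⌋₊ : ℝ) ≤
          1 + (cnt {n : ℕ | 1/4 ≤ ‖((a n : ℤ)) • x‖} n : ℝ) := by
        have : (⌊((n:ℝ)+1)^γ⌋₊ : ℕ) ≤ 1 + cnt {n : ℕ | 1/4 ≤ ‖((a n : ℤ)) • x‖} n := by
          calc ⌊((n:ℝ)+1)^γ⌋₊ = ⌊((n:ℝ)+1)^((t:ℝ)⁻¹)⌋₊ := by rw [hγdef]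
          _ ≤ 1 + cnt {m | m + 1 ∈ Stmt18aux.Sset t} n := hcnt1
          _ ≤ _ := by omega
        exact_mod_cast this
      linarith
    -- x is in the α-density set
    apply hnotmem
    rw [hEq]
    simp only [Set.mem_setOf_eq]
    intro ε hε
    obtain ⟨K, hK⟩ := exists_pow_lt_of_lt_one hε (by norm_num : (1:ℝ)/2 < 1)
    have hsub : {m : ℕ | ε ≤ ‖((a m : ℤ)) • x‖} ⊆
        {m : ℕ | ∃ s, s ∈ Stmt18aux.Sset t ∧ m < s ∧ s ≤ m + K} := by
      intro m hm
      rw [Set.mem_setOf_eq] at hm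
      by_contra hnot
      simp only [Set.mem_setOf_eq, not_exists, not_and] at hnot
      have hc0 : ∀ n, m < n → n < m + K + 1 → Stmt18aux.cseq a t n = 0 := by
        intro n h1 h2
        apply Stmt18aux.cseq_eq_zero
        intro hS
        exact (hnot n hS h1) (by omega)
      have hT := Stmt18aux.Ttail_le ha ht1 m (m + K + 1) (by omega) hc0
      have hidx : m + K + 1 - 1 = m + K := by omega
      rw [hidx] at hT
      have p2 : (0:ℝ) < (a (m+K) : ℝ) := by exact_mod_cast Stmt18aux.a_pos ha (m+K)
      have h4 := Stmt18aux.apow_le ha m K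
      have hpow : ((1:ℝ)/2)^K * (2:ℝ)^K = 1 := by rw [← mul_pow]; norm_num
      have h5 := mul_le_mul_of_nonneg_left h4
        (le_of_lt (pow_pos (by norm_num : (0:ℝ) < 1/2) K))
      have hT2 : (a m : ℝ) / (a (m + K) : ℝ) ≤ (1/2)^K := by
        rw [div_le_iff₀ p2]
        calc (a m : ℝ) = (((1:ℝ)/2)^K * (2:ℝ)^K) * (a m : ℝ) := by rw [hpow]; ring
        _ = ((1:ℝ)/2)^K * ((2:ℝ)^K * (a m : ℝ)) := by ring
        _ ≤ ((1:ℝ)/2)^K * (a (m+K) : ℝ) := h5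
      have := hnorm_le m
      linarith
    apply Stmt18aux.part1 (le_of_lt hγ0) htα ((K:ℝ) * (2:ℝ)^γ)
    filter_upwards [eventually_ge_atTop (max K 1)] with n hn
    have hnK : K ≤ n := le_trans (le_max_left _ _) hn
    have hn1 : 1 ≤ n := le_trans (le_max_right _ _) hn
    have c1 : cnt {m : ℕ | ε ≤ ‖((a m : ℤ)) • x‖} n ≤
        K * cnt (Stmt18aux.Sset t) (n + K) :=
      le_trans (Stmt18aux.cnt_mono hsub n) (Stmt18aux.cnt_D_le t K n)
    have c2 : cnt (Stmt18aux.Sset t) (n + K) ≤ ⌊((n + K : ℕ) : ℝ)^((t:ℝ)⁻¹)⌋₊ :=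
      Stmt18aux.cnt_S_le t ht1 (n + K)
    have r1 : ((cnt {m : ℕ | ε ≤ ‖((a m : ℤ)) • x‖} n : ℕ) : ℝ) ≤
        (K : ℝ) * (⌊((n + K : ℕ) : ℝ)^((t:ℝ)⁻¹)⌋₊ : ℝ) := by
      exact_mod_cast le_trans c1 (Nat.mul_le_mul_left K c2)
    have r2 : (⌊((n + K : ℕ) : ℝ)^((t:ℝ)⁻¹)⌋₊ : ℝ) ≤ ((n + K : ℕ) : ℝ)^γ := by
      rw [hγdef]
      exact Nat.floor_le (by positivity)
    have r3 : ((n + K : ℕ) : ℝ)^γ ≤ (2:ℝ)^γ * (n:ℝ)^γ := by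
      have hle2 : ((n + K : ℕ) : ℝ) ≤ 2 * (n:ℝ) := by
        push_cast
        have : (K:ℝ) ≤ (n:ℝ) := by exact_mod_cast hnK
        linarith
      calc ((n + K : ℕ) : ℝ)^γ ≤ (2 * (n:ℝ))^γ :=
            Real.rpow_le_rpow (by positivity) hle2 (le_of_lt hγ0)
      _ = (2:ℝ)^γ * (n:ℝ)^γ := Real.mul_rpow (by norm_num) (by positivity)
    have hKnn : (0:ℝ) ≤ (K:ℝ) := by positivity
    calc ((cnt {m : ℕ | ε ≤ ‖((a m : ℤ)) • x‖} n : ℕ) : ℝ)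
        ≤ (K : ℝ) * ((n + K : ℕ) : ℝ)^γ := le_trans r1 (by nlinarith)
    _ ≤ (K : ℝ) * ((2:ℝ)^γ * (n:ℝ)^γ) := by nlinarith
    _ = (K : ℝ) * (2:ℝ)^γ * (n:ℝ)^γ := by ring
end
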